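/- arXiv:2102.03693 — 4 statements merged into one kernel-verified Lean document; each statement's English description precedes it below -/
import Mathlib

section
/- Let K be a field of characteristic zero and σ the K-automorphism of K(t) sending t to t+1. Let f = a/b ∈ K(t) with a, b ∈ K[t], gcd(a,b) = 1, and let p ∈ K[t] be an irreducible factor of b. Let L = Σ_{i=0}^ρ ℓ_i σ^i with ℓ_i ∈ K[t], ℓ_ρ·ℓ_0 ≠ 0, and suppose σ^i(p) does not divide ℓ_ρ·ℓ_0 for any integer i. Then the local dispersion at p of L(f) := Σ_{i=0}^ρ ℓ_i·σ^i(f) equals dis_p(f) + ρ. -/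
open Polynomial
open scoped Classical

/-- The shift `σ^i` on `K[t]`, sending `q(t)` to `q(t + i)`. -/
noncomputable def shiftPoly {K : Type*} [Field K] (i : ℤ) (q : K[X]) : K[X] :=
  q.comp (X + C (i : K))

/-- The local dispersion of `u ∈ K[t]` at an irreducible `p`: the supremum of `|i - j|` over
integers `i, j` with `σ^i(p) ∣ u` and `σ^j(p) ∣ u` (`0` when no shift of `p` divides `u`,
since `sSup ∅ = 0`), with `dis_p(0) = ⊤`. -/
noncomputable def locDisp {K : Type*} [Field K] (p u : K[X]) : ℕ∞ :=
  if u = 0 then ⊤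
  else sSup {d : ℕ∞ | ∃ i j : ℤ, shiftPoly i p ∣ u ∧ shiftPoly j p ∣ u ∧
    d = ((i - j).natAbs : ℕ∞)}

section Aux

variable {K : Type*} [Field K]

lemma shiftPoly_mul (i : ℤ) (u v : K[X]) :
    shiftPoly i (u * v) = shiftPoly i u * shiftPoly i v := mul_comp u v _

lemma shiftPoly_zero_shift (q : K[X]) : shiftPoly 0 q = q := by
  simp [shiftPoly]

lemma shiftPoly_add (i j : ℤ) (q : K[X]) :
    shiftPoly (i + j) q = shiftPoly i (shiftPoly j q) := by
  unfold shiftPoly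
  rw [comp_assoc]
  congr 1
  simp only [add_comp, X_comp, C_comp]
  push_cast
  rw [C_add]
  ring

lemma shiftPoly_dvd {u v : K[X]} (i : ℤ) (h : u ∣ v) : shiftPoly i u ∣ shiftPoly i v := by
  obtain ⟨c, rfl⟩ := h
  exact ⟨shiftPoly i c, mul_comp u c _⟩

lemma shiftPoly_dvd_iff {u v : K[X]} (i : ℤ) : shiftPoly i u ∣ shiftPoly i v ↔ u ∣ v := by
  constructor
  · intro h
    have h2 := shiftPoly_dvd (-i) h
    rwa [← shiftPoly_add, ← shiftPoly_add, neg_add_cancel, shiftPoly_zero_shift,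
      shiftPoly_zero_shift] at h2
  · exact shiftPoly_dvd i

lemma shiftPoly_eq_zero_iff {q : K[X]} {i : ℤ} : shiftPoly i q = 0 ↔ q = 0 := by
  constructor
  · intro h
    have h2 : shiftPoly (-i) (shiftPoly i q) = shiftPoly (-i) 0 := by rw [h]
    rwa [← shiftPoly_add, neg_add_cancel, shiftPoly_zero_shift,
      show shiftPoly (-i) (0 : K[X]) = 0 from zero_comp] at h2
  · rintro rfl; exact zero_comp

lemma shiftPoly_ne_zero {q : K[X]} (h : q ≠ 0) (i : ℤ) : shiftPoly i q ≠ 0 :=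
  fun hh => h (shiftPoly_eq_zero_iff.mp hh)

lemma shiftPoly_def' (i : ℤ) (q : K[X]) :
    shiftPoly i q = algEquivAevalXAddC ((i : K)) q := rfl

lemma shiftPoly_irreducible {p : K[X]} (hp : Irreducible p) (i : ℤ) :
    Irreducible (shiftPoly i p) := by
  rw [shiftPoly_def']
  exact Irreducible.map (algEquivAevalXAddC ((i : K))) hp

lemma shiftPoly_prime {p : K[X]} (hp : Irreducible p) (i : ℤ) : Prime (shiftPoly i p) :=
  (shiftPoly_irreducible hp i).prime

lemma shiftPoly_isCoprime {u v : K[X]} (h : IsCoprime u v) (i : ℤ) :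
    IsCoprime (shiftPoly i u) (shiftPoly i v) := by
  obtain ⟨x, y, hxy⟩ := h
  refine ⟨shiftPoly i x, shiftPoly i y, ?_⟩
  have h2 := congrArg (fun q => shiftPoly i q) hxy
  simpa [shiftPoly, add_comp, mul_comp, one_comp] using h2

lemma finite_shift_divisors [CharZero K] {u p : K[X]} (hu : u ≠ 0) (hp : Irreducible p) :
    {j : ℤ | shiftPoly j p ∣ u}.Finite := by
  set A := AlgebraicClosure K
  obtain ⟨α, hα⟩ := IsAlgClosed.exists_aeval_eq_zero A p (degree_pos_of_irreducible hp).ne'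
  set g : ℤ → A := fun j => α - algebraMap K A ((j : K)) with hg
  have hginj : Function.Injective g := by
    intro i j hij
    have h1 : algebraMap K A ((i : K)) = algebraMap K A ((j : K)) := by
      have h2 : algebraMap K A ((i : K)) = α - (α - algebraMap K A ((i : K))) :=
        (sub_sub_cancel _ _).symm
      rw [h2]
      have h3 : g i = g j := hij
      rw [hg] at h3
      simp only at h3
      rw [h3, sub_sub_cancel]
    exact Int.cast_injective ((algebraMap K A).injective h1)
  have hroots : {x : A | (aeval x) u = 0}.Finite := by
    have h1 : (u.map (algebraMap K A)) ≠ 0 := map_ne_zero hu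
    have h2 : {x : A | (aeval x) u = 0} = {x : A | IsRoot (u.map (algebraMap K A)) x} := by
      ext x
      simp [IsRoot, eval_map, aeval_def]
    rw [h2]
    exact finite_setOf_isRoot h1
  apply Set.Finite.subset ((hroots.preimage (hginj.injOn)))
  intro j hj
  obtain ⟨c, hc⟩ := hj
  simp only [Set.mem_preimage, Set.mem_setOf_eq, hc, map_mul]
  have h3 : (aeval (g j)) (shiftPoly j p) = 0 := by
    rw [shiftPoly, aeval_comp]
    have h4 : (aeval (g j)) (X + C ((j : K))) = α := by
      simp [hg, sub_add_cancel]
    rw [h4, hα]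
  rw [h3, zero_mul]

lemma locDisp_eq_of {p u : K[X]} (hu : u ≠ 0) {m M : ℤ}
    (hm : shiftPoly m p ∣ u) (hM : shiftPoly M p ∣ u)
    (hbd : ∀ j : ℤ, shiftPoly j p ∣ u → m ≤ j ∧ j ≤ M) :
    locDisp p u = ((M - m).natAbs : ℕ∞) := by
  rw [locDisp, if_neg hu]
  apply le_antisymm
  · apply sSup_le
    rintro d ⟨i, j, hi, hj, rfl⟩
    have h1 := hbd i hi
    have h2 := hbd j hj
    exact Nat.cast_le.mpr (by omega)
  · exact le_sSup ⟨M, m, hM, hm, rfl⟩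

end Aux

/-- Let `f = a/b ∈ K(t)` with `gcd(a,b) = 1` and `p` an irreducible factor of `b`.
If `L = Σ_{i=0}^ρ ℓ_i S_t^i` with `ℓ_ρ ℓ_0 ≠ 0` and no shift `σ^i(p)` divides `ℓ_ρ ℓ_0`,
then `dis_p(L(f)) = dis_p(f) + ρ`, where `dis_p` of a rational function is the local
dispersion of its reduced denominator. -/
theorem locDisp_apply_operator {K : Type*} [Field K] [CharZero K]
    (a b p : K[X]) (hb : b ≠ 0) (hab : IsCoprime a b)
    (hp : Irreducible p) (hpb : p ∣ b)
    (ρ : ℕ) (ℓ : ℕ → K[X]) (hℓ : ℓ ρ * ℓ 0 ≠ 0)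
    (hℓp : ∀ i : ℤ, ¬ shiftPoly i p ∣ ℓ ρ * ℓ 0)
    (f Lf : RatFunc K)
    (hf : f = algebraMap K[X] (RatFunc K) a / algebraMap K[X] (RatFunc K) b)
    (hLf : Lf = ∑ i ∈ Finset.range (ρ + 1),
      algebraMap K[X] (RatFunc K) (ℓ i * shiftPoly i a) /
        algebraMap K[X] (RatFunc K) (shiftPoly i b)) :
    locDisp p Lf.denom = locDisp p b + (ρ : ℕ∞) := by
  classical
  have hprime : ∀ i : ℤ, Prime (shiftPoly i p) := shiftPoly_prime hp
  -- min and max shift dividing b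
  have hSfin : {j : ℤ | shiftPoly j p ∣ b}.Finite := finite_shift_divisors hb hp
  have hTne : hSfin.toFinset.Nonempty :=
    ⟨0, by simp only [Set.Finite.mem_toFinset, Set.mem_setOf_eq, shiftPoly_zero_shift]; exact hpb⟩
  set m : ℤ := hSfin.toFinset.min' hTne with hm
  set M : ℤ := hSfin.toFinset.max' hTne with hM
  have hmS : shiftPoly m p ∣ b := by
    have := hSfin.toFinset.min'_mem hTne
    rwa [Set.Finite.mem_toFinset] at this
  have hMS : shiftPoly M p ∣ b := by
    have := hSfin.toFinset.max'_mem hTne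
    rwa [Set.Finite.mem_toFinset] at this
  have hbd : ∀ j : ℤ, shiftPoly j p ∣ b → m ≤ j ∧ j ≤ M := by
    intro j hj
    have hjT : j ∈ hSfin.toFinset := by rwa [Set.Finite.mem_toFinset]
    exact ⟨hSfin.toFinset.min'_le j hjT, hSfin.toFinset.le_max' j hjT⟩
  -- common denominator
  set R : Finset ℕ := Finset.range (ρ + 1) with hR
  set B : ℕ → K[X] := fun i => shiftPoly (i : ℤ) b with hB
  set D : K[X] := ∏ i ∈ R, B i with hD
  set N : K[X] := ∑ i ∈ R, ℓ i * shiftPoly (i : ℤ) a * ∏ k ∈ R.erase i, B k with hN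
  have hBne : ∀ i, B i ≠ 0 := fun i => shiftPoly_ne_zero hb _
  have hDne : D ≠ 0 := by
    rw [hD]
    exact Finset.prod_ne_zero_iff.mpr fun i _ => hBne i
  have hdvdB : ∀ (j : ℤ) (i : ℕ), shiftPoly j p ∣ B i ↔ shiftPoly (j - i) p ∣ b := by
    intro j i
    have h1 : shiftPoly ((i : ℤ) + (j - i)) p = shiftPoly (i : ℤ) (shiftPoly (j - i) p) :=
      shiftPoly_add _ _ _
    rw [show (i : ℤ) + (j - i) = j by ring] at h1
    rw [hB]
    rw [h1]
    exact shiftPoly_dvd_iff _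
  have hLfND : Lf = algebraMap K[X] (RatFunc K) N / algebraMap K[X] (RatFunc K) D := by
    rw [hLf, hN, map_sum, Finset.sum_div]
    refine Finset.sum_congr rfl fun i hi => ?_
    have hDi : D = B i * ∏ k ∈ R.erase i, B k := (Finset.mul_prod_erase R B hi).symm
    rw [hDi]
    conv_rhs => rw [map_mul, show (algebraMap K[X] (RatFunc K)) (B i * ∏ k ∈ R.erase i, B k) =
      (algebraMap K[X] (RatFunc K)) (B i) * (algebraMap K[X] (RatFunc K)) (∏ k ∈ R.erase i, B k)
      from map_mul _ _ _]
    rw [mul_div_mul_right _ _ (RatFunc.algebraMap_ne_zero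
      (Finset.prod_ne_zero_iff.mpr fun k _ => hBne k))]
  have key : Lf.num * D = N * Lf.denom := by
    have h1 : algebraMap K[X] (RatFunc K) Lf.num / algebraMap K[X] (RatFunc K) Lf.denom =
        algebraMap K[X] (RatFunc K) N / algebraMap K[X] (RatFunc K) D := by
      rw [RatFunc.num_div_denom, hLfND]
    rw [div_eq_div_iff (RatFunc.algebraMap_ne_zero (RatFunc.denom_ne_zero Lf))
      (RatFunc.algebraMap_ne_zero hDne)] at h1
    apply RatFunc.algebraMap_injective K
    rw [map_mul, map_mul]
    exact h1
  have hρR : ρ ∈ R := by rw [hR]; exact Finset.self_mem_range_succ ρ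
  have h0R : (0 : ℕ) ∈ R := by rw [hR]; exact Finset.mem_range.mpr (Nat.succ_pos ρ)
  -- the extreme shift at the top : q = σ^{M+ρ} p
  have hqBρ : shiftPoly (M + ρ) p ∣ B ρ := by
    rw [hdvdB]
    rw [show (M + (ρ : ℤ)) - (ρ : ℤ) = M by ring]
    exact hMS
  have hq'B0 : shiftPoly m p ∣ B 0 := by
    rw [hdvdB]
    rw [show m - ((0 : ℕ) : ℤ) = m by push_cast; ring]
    exact hmS
  have hq_not_N : ¬ shiftPoly (M + ρ) p ∣ N := by
    intro hdvd
    have hterm : ∀ i ∈ R.erase ρ,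
        shiftPoly (M + ρ) p ∣ ℓ i * shiftPoly (i : ℤ) a * ∏ k ∈ R.erase i, B k := by
      intro i hi
      have hiρ : i ≠ ρ := Finset.ne_of_mem_erase hi
      have hρerase : ρ ∈ R.erase i := Finset.mem_erase.mpr ⟨fun h => hiρ h.symm, hρR⟩
      exact Dvd.dvd.mul_left (hqBρ.trans (Finset.dvd_prod_of_mem B hρerase)) _
    have hsum : shiftPoly (M + ρ) p ∣ ∑ i ∈ R.erase ρ,
        ℓ i * shiftPoly (i : ℤ) a * ∏ k ∈ R.erase i, B k :=
      Finset.dvd_sum hterm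
    have hsplit : N = ℓ ρ * shiftPoly (ρ : ℤ) a * ∏ k ∈ R.erase ρ, B k + ∑ i ∈ R.erase ρ,
        ℓ i * shiftPoly (i : ℤ) a * ∏ k ∈ R.erase i, B k := by
      rw [hN]
      exact (Finset.add_sum_erase R _ hρR).symm
    have hqρ : shiftPoly (M + ρ) p ∣ ℓ ρ * shiftPoly (ρ : ℤ) a * ∏ k ∈ R.erase ρ, B k := by
      have := dvd_sub hdvd hsum
      rwa [hsplit, add_sub_cancel_right] at this
    rcases (hprime (M + ρ)).2.2 _ _ hqρ with h | h
    · rcases (hprime (M + ρ)).2.2 _ _ h with h2 | h2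
      · exact hℓp (M + ρ) (dvd_mul_of_dvd_left h2 (ℓ 0))
      · -- divides σ^ρ a, but also σ^ρ b : contradiction with coprimality
        have hcop : IsCoprime (shiftPoly (ρ : ℤ) a) (shiftPoly (ρ : ℤ) b) :=
          shiftPoly_isCoprime hab _
        have hunit := hcop.isUnit_of_dvd' h2 hqBρ
        exact (hprime (M + ρ)).not_unit hunit
    · obtain ⟨k, hkR, hk⟩ := (hprime (M + ρ)).exists_mem_finset_dvd h
      have hkρ : k ≠ ρ := Finset.ne_of_mem_erase hkR
      have hkle : k ≤ ρ := by
        have := Finset.mem_range.mp (Finset.mem_of_mem_erase hkR)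
        omega
      have hmem := (hbd _ ((hdvdB _ _).mp hk)).2
      have : (k : ℤ) ≤ ρ := by exact_mod_cast hkle
      omega
  have hq'_not_N : ¬ shiftPoly m p ∣ N := by
    intro hdvd
    have hterm : ∀ i ∈ R.erase 0,
        shiftPoly m p ∣ ℓ i * shiftPoly (i : ℤ) a * ∏ k ∈ R.erase i, B k := by
      intro i hi
      have hi0 : i ≠ 0 := Finset.ne_of_mem_erase hi
      have h0erase : (0 : ℕ) ∈ R.erase i := Finset.mem_erase.mpr ⟨fun h => hi0 h.symm, h0R⟩
      exact Dvd.dvd.mul_left (hq'B0.trans (Finset.dvd_prod_of_mem B h0erase)) _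
    have hsum : shiftPoly m p ∣ ∑ i ∈ R.erase 0,
        ℓ i * shiftPoly (i : ℤ) a * ∏ k ∈ R.erase i, B k :=
      Finset.dvd_sum hterm
    have hsplit : N = ℓ 0 * shiftPoly ((0 : ℕ) : ℤ) a * ∏ k ∈ R.erase 0, B k + ∑ i ∈ R.erase 0,
        ℓ i * shiftPoly (i : ℤ) a * ∏ k ∈ R.erase i, B k := by
      rw [hN]
      exact (Finset.add_sum_erase R _ h0R).symm
    have hq0 : shiftPoly m p ∣ ℓ 0 * shiftPoly ((0 : ℕ) : ℤ) a * ∏ k ∈ R.erase 0, B k := by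
      have := dvd_sub hdvd hsum
      rwa [hsplit, add_sub_cancel_right] at this
    rcases (hprime m).2.2 _ _ hq0 with h | h
    · rcases (hprime m).2.2 _ _ h with h2 | h2
      · exact hℓp m (dvd_mul_of_dvd_right h2 (ℓ ρ))
      · have hcop : IsCoprime (shiftPoly ((0 : ℕ) : ℤ) a) (shiftPoly ((0 : ℕ) : ℤ) b) :=
          shiftPoly_isCoprime hab _
        have hunit := hcop.isUnit_of_dvd' h2 hq'B0
        exact (hprime m).not_unit hunit
    · obtain ⟨k, hkR, hk⟩ := (hprime m).exists_mem_finset_dvd h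
      have hk0 : k ≠ 0 := Finset.ne_of_mem_erase hkR
      have hmem := (hbd _ ((hdvdB _ _).mp hk)).1
      have : (1 : ℤ) ≤ (k : ℤ) := by exact_mod_cast Nat.one_le_iff_ne_zero.mpr hk0
      omega
  -- extreme shifts divide the reduced denominator
  have hqden : shiftPoly (M + ρ) p ∣ Lf.denom := by
    have h1 : shiftPoly (M + ρ) p ∣ Lf.num * D :=
      Dvd.dvd.mul_left (hqBρ.trans (Finset.dvd_prod_of_mem B hρR)) _
    rw [key] at h1
    rcases (hprime (M + ρ)).2.2 _ _ h1 with h | h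
    · exact absurd h hq_not_N
    · exact h
  have hq'den : shiftPoly m p ∣ Lf.denom := by
    have h1 : shiftPoly m p ∣ Lf.num * D :=
      Dvd.dvd.mul_left (hq'B0.trans (Finset.dvd_prod_of_mem B h0R)) _
    rw [key] at h1
    rcases (hprime m).2.2 _ _ h1 with h | h
    · exact absurd h hq'_not_N
    · exact h
  -- all shifts dividing the denominator are between m and M + ρ
  have hbdden : ∀ j : ℤ, shiftPoly j p ∣ Lf.denom → m ≤ j ∧ j ≤ M + ρ := by
    intro j hj
    have hdd : Lf.denom ∣ D := by
      rw [hLfND]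
      exact RatFunc.denom_div_dvd N D
    have hjD : shiftPoly j p ∣ D := hj.trans hdd
    obtain ⟨i, hiR, hiB⟩ := (hprime j).exists_mem_finset_dvd hjD
    have h1 := hbd _ ((hdvdB _ _).mp hiB)
    have h2 : (i : ℤ) ≤ ρ := by
      have := Finset.mem_range.mp hiR
      omega
    have h3 : (0 : ℤ) ≤ (i : ℤ) := Int.natCast_nonneg i
    omega
  rw [locDisp_eq_of (RatFunc.denom_ne_zero Lf) hq'den hqden hbdden,
    locDisp_eq_of hb hmS hMS hbd]
  have hmM : m ≤ M := (hbd M hMS).1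
  rw [← Nat.cast_add]
  congr 1
  omega
end

section
/- Let F be a field of characteristic zero and f = a/b ∈ F(t, x₁, …, x_m) with a, b ∈ F[t, x₁, …, x_m] and gcd(a,b) = 1. If there exists a nonzero operator L = Σ_{i=0}^ρ ℓ_i D_t^i with ℓ_i ∈ F(t), ℓ_ρ ≠ 0, such that L(f) = 0 (where D_t = ∂/∂t), then the denominator b is split, i.e., b = c·q(t)·r(x₁,…,x_m) for some polynomials q ∈ F[t], r ∈ F[x₁, …, x_m], and c ∈ F. -/
open Polynomial
open scoped nonZeroDivisors

/-- The derivative `d/dt` on `K(t)` (with constants `K`), by the quotient rule on the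
reduced representation. -/
noncomputable def ratDeriv {K : Type*} [Field K] (f : RatFunc K) : RatFunc K :=
  (algebraMap K[X] (RatFunc K) (derivative f.num) * algebraMap K[X] (RatFunc K) f.denom -
      algebraMap K[X] (RatFunc K) f.num * algebraMap K[X] (RatFunc K) (derivative f.denom)) /
    algebraMap K[X] (RatFunc K) (f.denom ^ 2)

/-- The natural embedding `F(t) → K(t)` induced by `F ⊆ K`. -/
noncomputable def liftRF {F K : Type*} [Field F] [Field K] [Algebra F K] :
    RatFunc F →+* RatFunc K :=
  RatFunc.mapRingHom (Polynomial.mapRingHom (algebraMap F K)) (by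
    intro q hq
    simp only [Submonoid.mem_comap, Polynomial.coe_mapRingHom]
    exact mem_nonZeroDivisors_of_ne_zero
      ((Polynomial.map_ne_zero_iff (algebraMap F K).injective).mpr
        (nonZeroDivisors.ne_zero hq)))

/-- The embedding of `F[t, x₁, …, x_m] = (F[x])[t]` into `F(t, x₁, …, x_m) = K(t)`,
where `K = F(x₁, …, x_m)`. -/
noncomputable def polyToRF {F : Type*} [Field F] (m : ℕ)
    (u : Polynomial (MvPolynomial (Fin m) F)) :
    RatFunc (FractionRing (MvPolynomial (Fin m) F)) :=
  algebraMap (Polynomial (FractionRing (MvPolynomial (Fin m) F))) _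
    (u.map (algebraMap (MvPolynomial (Fin m) F) (FractionRing (MvPolynomial (Fin m) F))))

section DerivLemmas

variable {K : Type*} [Field K]

lemma num_mul_eq {A B : K[X]} (hB : B ≠ 0) {f : RatFunc K}
    (hf : f = algebraMap K[X] (RatFunc K) A / algebraMap K[X] (RatFunc K) B) :
    f.num * B = f.denom * A := by
  have h1 : algebraMap K[X] (RatFunc K) f.num / algebraMap K[X] (RatFunc K) f.denom
      = algebraMap K[X] (RatFunc K) A / algebraMap K[X] (RatFunc K) B := by
    rw [RatFunc.num_div_denom, hf]
  rw [div_eq_div_iff (RatFunc.algebraMap_ne_zero f.denom_ne_zero)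
    (RatFunc.algebraMap_ne_zero hB)] at h1
  apply RatFunc.algebraMap_injective K
  rw [map_mul, map_mul]
  rw [h1]; ring

lemma ratDeriv_div (A : K[X]) {B : K[X]} (hB : B ≠ 0) :
    ratDeriv (algebraMap K[X] (RatFunc K) A / algebraMap K[X] (RatFunc K) B) =
      algebraMap K[X] (RatFunc K) (derivative A * B - A * derivative B) /
        algebraMap K[X] (RatFunc K) (B ^ 2) := by
  set f : RatFunc K := algebraMap K[X] (RatFunc K) A / algebraMap K[X] (RatFunc K) B with hfdef
  have h1 : f.num * B = f.denom * A := num_mul_eq hB hfdef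
  have h2 : derivative f.num * B + f.num * derivative B
      = derivative f.denom * A + f.denom * derivative A := by
    have h := congrArg derivative h1
    simpa only [derivative_mul] using h
  rw [ratDeriv]
  rw [div_eq_div_iff (RatFunc.algebraMap_ne_zero (pow_ne_zero 2 f.denom_ne_zero))
    (RatFunc.algebraMap_ne_zero (pow_ne_zero 2 hB))]
  simp only [← map_mul, ← map_sub]
  congr 1
  linear_combination (f.denom * B) * h2 - (derivative f.denom * B + f.denom * derivative B) * h1

lemma prime_not_dvd_derivative [CharZero K] {p : K[X]} (hp : Prime p) :
    ¬ p ∣ derivative p := by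
  intro hdvd
  have hnd : p.natDegree ≠ 0 := by
    intro h
    have hC := eq_C_of_natDegree_eq_zero h
    have hc : p.coeff 0 ≠ 0 := fun hc => hp.ne_zero (by rw [hC, hc, map_zero])
    exact hp.not_unit (hC ▸ isUnit_C.mpr (IsUnit.mk0 _ hc))
  have hd0 : derivative p ≠ 0 := fun h => hnd (natDegree_eq_zero_of_derivative_eq_zero h)
  have hle := natDegree_le_of_dvd hdvd hd0
  exact absurd hle (not_le.mpr (natDegree_derivative_lt hnd))

lemma ratDeriv_step [CharZero K] {p : K[X]} (hp : Prime p)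
    {k : ℕ} (hk : k ≠ 0) {A C : K[X]} (hA : ¬ p ∣ A) (hC : ¬ p ∣ C) :
    ∃ A' C' : K[X], (¬ p ∣ A') ∧ (¬ p ∣ C') ∧
      ratDeriv (algebraMap K[X] (RatFunc K) A / algebraMap K[X] (RatFunc K) (p ^ k * C)) =
        algebraMap K[X] (RatFunc K) A' / algebraMap K[X] (RatFunc K) (p ^ (k + 1) * C') := by
  obtain ⟨j, rfl⟩ : ∃ j, k = j + 1 := ⟨k - 1, (Nat.succ_pred_eq_of_pos (Nat.pos_of_ne_zero hk)).symm⟩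
  have hp0 : p ≠ 0 := hp.ne_zero
  have hC0 : C ≠ 0 := fun h => hC (h ▸ dvd_zero p)
  have hB : p ^ (j + 1) * C ≠ 0 := mul_ne_zero (pow_ne_zero _ hp0) hC0
  have hB' : p ^ (j + 1 + 1) * C ^ 2 ≠ 0 :=
    mul_ne_zero (pow_ne_zero _ hp0) (pow_ne_zero _ hC0)
  refine ⟨p * (derivative A * C - A * derivative C)
      - Polynomial.C ((j + 1 : ℕ) : K) * A * derivative p * C, C ^ 2, ?_, ?_, ?_⟩
  · intro hdvd
    have h2 : p ∣ p * (derivative A * C - A * derivative C) := dvd_mul_right _ _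
    have h3 : p ∣ Polynomial.C ((j + 1 : ℕ) : K) * A * derivative p * C := by
      have := dvd_sub h2 hdvd
      rwa [sub_sub_cancel] at this
    rcases hp.dvd_mul.mp h3 with h4 | h4
    · rcases hp.dvd_mul.mp h4 with h5 | h5
      · rcases hp.dvd_mul.mp h5 with h6 | h6
        · have hcne : ((j + 1 : ℕ) : K) ≠ 0 := Nat.cast_ne_zero.mpr (by omega)
          exact hp.not_unit (isUnit_of_dvd_unit h6 (isUnit_C.mpr (IsUnit.mk0 _ hcne)))
        · exact hA h6
      · exact prime_not_dvd_derivative hp h5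
    · exact hC h4
  · exact fun h => hC (hp.dvd_of_dvd_pow h)
  · rw [ratDeriv_div A hB]
    rw [div_eq_div_iff (RatFunc.algebraMap_ne_zero (pow_ne_zero 2 hB))
      (RatFunc.algebraMap_ne_zero hB')]
    rw [← map_mul, ← map_mul]
    refine congrArg _ ?_
    rw [derivative_mul, derivative_pow]
    simp only [Nat.add_sub_cancel]
    ring

lemma ratDeriv_iter [CharZero K] {p : K[X]} (hp : Prime p) (i : ℕ) :
    ∀ {k : ℕ}, k ≠ 0 → ∀ {A C : K[X]}, ¬ p ∣ A → ¬ p ∣ C →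
    ∃ A' C' : K[X], (¬ p ∣ A') ∧ (¬ p ∣ C') ∧
      ratDeriv^[i] (algebraMap K[X] (RatFunc K) A / algebraMap K[X] (RatFunc K) (p ^ k * C)) =
        algebraMap K[X] (RatFunc K) A' / algebraMap K[X] (RatFunc K) (p ^ (k + i) * C') := by
  induction i with
  | zero => intro k hk A C hA hC; exact ⟨A, C, hA, hC, rfl⟩
  | succ n IH =>
    intro k hk A C hA hC
    obtain ⟨A', C', hA', hC', hEq⟩ := IH hk hA hC
    obtain ⟨A'', C'', hA'', hC'', hEq2⟩ := ratDeriv_step hp (k := k + n) (by omega) hA' hC'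
    refine ⟨A'', C'', hA'', hC'', ?_⟩
    rw [Function.iterate_succ_apply', hEq, hEq2]
    norm_num [add_assoc]

end DerivLemmas

lemma finSuccEquiv_C' {R : Type*} [CommSemiring R] (n : ℕ) (c : R) :
    MvPolynomial.finSuccEquiv R n (MvPolynomial.C c) = Polynomial.C (MvPolynomial.C c) := by
  simp [MvPolynomial.finSuccEquiv_apply]

/-- Divisors of nonzero constants in `MvPolynomial` over a domain are constants. -/
lemma eq_C_of_mul_eq_C {R : Type*} [CommRing R] [IsDomain R] :
    ∀ (m : ℕ) (h g : MvPolynomial (Fin m) R) (c : R), c ≠ 0 →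
      h * g = MvPolynomial.C c → ∃ d : R, h = MvPolynomial.C d := by
  intro m
  induction m with
  | zero =>
    intro h g c _ _
    obtain ⟨d, hd⟩ := MvPolynomial.C_surjective (Fin 0) h
    exact ⟨d, hd.symm⟩
  | succ n IH =>
    intro h g c hc hm
    set e := MvPolynomial.finSuccEquiv R n with he
    have hmul : e h * e g = Polynomial.C (MvPolynomial.C c) := by
      rw [← map_mul, hm, finSuccEquiv_C']
    have hCc : Polynomial.C (MvPolynomial.C c) ≠ (0 : Polynomial (MvPolynomial (Fin n) R)) := by
      simp only [ne_eq, Polynomial.C_eq_zero, MvPolynomial.C_eq_zero]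
      exact hc
    have hh0 : e h ≠ 0 := fun h0 => hCc (by rw [← hmul, h0, zero_mul])
    have hg0 : e g ≠ 0 := fun h0 => hCc (by rw [← hmul, h0, mul_zero])
    have hdeg : (e h).natDegree = 0 := by
      have hnm := natDegree_mul hh0 hg0
      rw [hmul, natDegree_C] at hnm
      omega
    have hCa : e h = Polynomial.C ((e h).coeff 0) := eq_C_of_natDegree_eq_zero hdeg
    have hkey : (e h).coeff 0 * (e g).coeff 0 = MvPolynomial.C c := by
      rw [hCa] at hmul
      have h0 := congrArg (fun q => Polynomial.coeff q 0) hmul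
      simpa only [Polynomial.coeff_C_mul, Polynomial.coeff_C_zero] using h0
    obtain ⟨d, hd⟩ := IH ((e h).coeff 0) ((e g).coeff 0) c hc hkey
    refine ⟨d, e.injective ?_⟩
    rw [he, finSuccEquiv_C', ← he, hCa, hd]

/-- The swap equivalence `(F[x₁..xₘ])[t] ≃ (F[t])[x₁..xₘ]`. -/
noncomputable def swapEquiv (F : Type*) [Field F] (m : ℕ) :
    Polynomial (MvPolynomial (Fin m) F) ≃+* MvPolynomial (Fin m) F[X] :=
  (((MvPolynomial.optionEquivLeft F (Fin m)).symm.trans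
    (MvPolynomial.optionEquivRight F (Fin m)))).toRingEquiv

lemma swapEquiv_symm_C {F : Type*} [Field F] (m : ℕ) (q : F[X]) :
    (swapEquiv F m).symm (MvPolynomial.C q) = q.map (algebraMap F (MvPolynomial (Fin m) F)) := by
  have hrfl : ∀ x, (swapEquiv F m).symm x = (MvPolynomial.optionEquivLeft F (Fin m))
      ((MvPolynomial.optionEquivRight F (Fin m)).symm x) := fun x => rfl
  have hhom : (((swapEquiv F m).symm : MvPolynomial (Fin m) F[X] ≃+*
        Polynomial (MvPolynomial (Fin m) F)) : MvPolynomial (Fin m) F[X] →+*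
        Polynomial (MvPolynomial (Fin m) F)).comp
        (MvPolynomial.C : F[X] →+* MvPolynomial (Fin m) F[X])
      = Polynomial.mapRingHom (algebraMap F (MvPolynomial (Fin m) F)) := by
    apply Polynomial.ringHom_ext
    · intro a
      simp only [RingHom.comp_apply, coe_mapRingHom, map_C, RingEquiv.coe_toRingHom]
      rw [hrfl]
      have h1 : (MvPolynomial.C (Polynomial.C a) : MvPolynomial (Fin m) F[X])
          = MvPolynomial.optionEquivRight F (Fin m) (MvPolynomial.C a) := by
        rw [MvPolynomial.optionEquivRight_C]
      rw [h1, AlgEquiv.symm_apply_apply, MvPolynomial.optionEquivLeft_C,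
        MvPolynomial.algebraMap_eq]
    · simp only [RingHom.comp_apply, coe_mapRingHom, map_X, RingEquiv.coe_toRingHom]
      rw [hrfl]
      have h1 : (MvPolynomial.C (Polynomial.X) : MvPolynomial (Fin m) F[X])
          = MvPolynomial.optionEquivRight F (Fin m) (MvPolynomial.X none) := by
        rw [MvPolynomial.optionEquivRight_X_none]
      rw [h1, AlgEquiv.symm_apply_apply, MvPolynomial.optionEquivLeft_X_none]
  exact RingHom.congr_fun hhom q


/-- If `h * g` has all coefficients in (the image of) `F`, then `h` is the image of a
polynomial over `F`. -/
lemma split_of_mul_eq_map {F : Type*} [Field F] {m : ℕ} {h g : Polynomial (MvPolynomial (Fin m) F)} {Q : F[X]}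
    (hQ : Q ≠ 0) (hmul : h * g = Q.map (algebraMap F (MvPolynomial (Fin m) F))) :
    ∃ q : F[X], h = q.map (algebraMap F (MvPolynomial (Fin m) F)) := by
  set e := swapEquiv F m with he
  have hQmap : e (Q.map (algebraMap F (MvPolynomial (Fin m) F))) = MvPolynomial.C Q := by
    rw [← swapEquiv_symm_C m Q, RingEquiv.apply_symm_apply]
  have hmul2 : e h * e g = MvPolynomial.C Q := by rw [← map_mul, hmul, hQmap]
  obtain ⟨d, hd⟩ := eq_C_of_mul_eq_C m (e h) (e g) Q hQ hmul2
  refine ⟨d, ?_⟩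
  have := congrArg (e.symm) hd
  rwa [RingEquiv.symm_apply_apply, swapEquiv_symm_C] at this

/-- A nonzero polynomial whose coefficients come from a subfield is primitive. -/
lemma isPrimitive_map_of_field {F R : Type*} [Field F] [CommRing R] [IsDomain R]
    [Algebra F R] {u : F[X]} (hu : u ≠ 0) [NormalizedGCDMonoid R] :
    (u.map (algebraMap F R)).IsPrimitive := by
  intro r hr
  obtain ⟨w, hw⟩ := hr
  have hci : u.coeff u.natDegree ≠ 0 := by
    rw [← Polynomial.leadingCoeff]
    exact Polynomial.leadingCoeff_ne_zero.mpr hu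
  have hcoe : (u.map (algebraMap F R)).coeff u.natDegree = r * w.coeff u.natDegree := by
    rw [hw, Polynomial.coeff_C_mul]
  rw [Polynomial.coeff_map] at hcoe
  have hdvd : r ∣ algebraMap F R (u.coeff u.natDegree) := ⟨w.coeff u.natDegree, hcoe⟩
  exact isUnit_of_dvd_unit hdvd ((IsUnit.mk0 _ hci).map (algebraMap F R))

/-- Relative primality over a UFD gives coprimality over the fraction field. -/
lemma isCoprime_map_of_isRelPrime {R K : Type*} [CommRing R] [IsDomain R]
    [UniqueFactorizationMonoid R] [Field K] [Algebra R K] [IsFractionRing R K]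
    {a b : R[X]} (hb : b ≠ 0) (hab : IsRelPrime a b) :
    IsCoprime (a.map (algebraMap R K)) (b.map (algebraMap R K)) := by
  classical
  letI : NormalizationMonoid R := UniqueFactorizationMonoid.normalizationMonoid.toNormalizationMonoid
  letI : NormalizedGCDMonoid R := UniqueFactorizationMonoid.toNormalizedGCDMonoid R
  have hinj : Function.Injective (algebraMap R K) := IsFractionRing.injective R K
  have hbK : b.map (algebraMap R K) ≠ 0 := (Polynomial.map_ne_zero_iff hinj).mpr hb
  by_cases ha : a = 0
  · subst ha
    have hbu : IsUnit b := hab (dvd_zero b) dvd_rfl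
    rw [Polynomial.map_zero]
    exact isCoprime_zero_left.mpr (hbu.map (Polynomial.mapRingHom (algebraMap R K)))
  have haK : a.map (algebraMap R K) ≠ 0 := (Polynomial.map_ne_zero_iff hinj).mpr ha
  by_contra hcop
  rw [← EuclideanDomain.gcd_isUnit_iff] at hcop
  have hg0 : EuclideanDomain.gcd (a.map (algebraMap R K)) (b.map (algebraMap R K)) ≠ 0 :=
    fun h => hbK (EuclideanDomain.gcd_eq_zero_iff.mp h).2
  obtain ⟨q, hqirr, hqdvd⟩ := WfDvdMonoid.exists_irreducible_factor hcop hg0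
  have hqa : q ∣ a.map (algebraMap R K) := hqdvd.trans (EuclideanDomain.gcd_dvd_left _ _)
  have hqb : q ∣ b.map (algebraMap R K) := hqdvd.trans (EuclideanDomain.gcd_dvd_right _ _)
  have hq0 : q ≠ 0 := hqirr.ne_zero
  -- lift q to a primitive polynomial over R
  obtain ⟨s, hs⟩ := IsLocalization.integerNormalization_map_to_map R⁰ q
  set q₁ := IsLocalization.integerNormalization R⁰ q with hq₁def
  have hs0 : (s : R) ≠ 0 := nonZeroDivisors.ne_zero s.2
  rw [Algebra.smul_def, Polynomial.algebraMap_apply] at hs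
  have hs0K : algebraMap R K (s : R) ≠ 0 := fun h => hs0 (hinj (by rwa [map_zero]))
  have hCs : (Polynomial.C (algebraMap R K (s : R)) : K[X]) ≠ 0 := by
    simpa [Polynomial.C_eq_zero] using hs0K
  have hq₁0 : q₁ ≠ 0 := by
    intro h
    rw [h, Polynomial.map_zero] at hs
    exact mul_ne_zero hCs hq0 hs.symm
  have hcont : algebraMap R K q₁.content ≠ 0 := by
    intro h
    have h2 : q₁.content = 0 := hinj (by rwa [map_zero])
    exact hq₁0 (Polynomial.content_eq_zero_iff.mp h2)
  -- map of primPart q₁ equals a nonzero constant times q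
  have hmapPP : q₁.primPart.map (algebraMap R K)
      = Polynomial.C (algebraMap R K (s : R) / algebraMap R K q₁.content) * q := by
    have h2 := congrArg (Polynomial.map (algebraMap R K)) q₁.eq_C_content_mul_primPart
    rw [Polynomial.map_mul, Polynomial.map_C, hs] at h2
    have hc0 : (Polynomial.C (algebraMap R K q₁.content) : K[X]) ≠ 0 := by
      simpa [Polynomial.C_eq_zero] using hcont
    apply mul_left_cancel₀ hc0
    rw [← h2, ← mul_assoc, ← Polynomial.C_mul,
      mul_div_cancel₀ _ hcont]
  have hu : IsUnit (Polynomial.C (algebraMap R K (s : R) / algebraMap R K q₁.content) : K[X]) := by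
    rw [Polynomial.isUnit_C]
    exact IsUnit.mk0 _ (div_ne_zero hs0K hcont)
  -- q₁.primPart divides a and b
  have hdvd_of : ∀ c : R[X], c ≠ 0 → q ∣ c.map (algebraMap R K) → q₁.primPart ∣ c := by
    intro c hc hqc
    have h1 : q₁.primPart.map (algebraMap R K) ∣ c.map (algebraMap R K) := by
      rw [hmapPP]
      exact (hu.mul_left_dvd).mpr hqc
    have h2 : q₁.primPart.map (algebraMap R K) ∣ (c.primPart).map (algebraMap R K) := by
      have hcc : algebraMap R K c.content ≠ 0 := fun h =>
        hc (Polynomial.content_eq_zero_iff.mp (hinj (by rwa [map_zero])))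
      have hcu : IsUnit (Polynomial.C (algebraMap R K c.content) : K[X]) :=
        Polynomial.isUnit_C.mpr (IsUnit.mk0 _ hcc)
      have h3 := congrArg (Polynomial.map (algebraMap R K)) c.eq_C_content_mul_primPart
      rw [Polynomial.map_mul, Polynomial.map_C] at h3
      rw [h3] at h1
      exact (hcu.dvd_mul_left).mp h1
    exact ((q₁.isPrimitive_primPart).dvd_of_fraction_map_dvd_fraction_map
      h2).trans c.primPart_dvd
  have hqa' : q₁.primPart ∣ a := hdvd_of a ha hqa
  have hqb' : q₁.primPart ∣ b := hdvd_of b hb hqb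
  have hunit : IsUnit q₁.primPart := hab hqa' hqb'
  have : IsUnit q := by
    have := hunit.map (Polynomial.mapRingHom (algebraMap R K))
    rw [Polynomial.coe_mapRingHom, hmapPP] at this
    exact isUnit_of_mul_isUnit_right this
  exact hqirr.not_isUnit this

/-- If every prime factor of `D` divides `E`, then `D ∣ E ^ natDegree D`. -/
lemma dvd_pow_of_prime_dvd {K : Type*} [Field K] :
    ∀ (n : ℕ) (D E : K[X]), D ≠ 0 → D.natDegree ≤ n →
      (∀ p : K[X], Prime p → p ∣ D → p ∣ E) → D ∣ E ^ n := by
  intro n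
  induction n with
  | zero =>
    intro D E hD hdeg _
    have : IsUnit D := by
      rw [Polynomial.eq_C_of_natDegree_eq_zero (Nat.le_zero.mp hdeg)]
      refine Polynomial.isUnit_C.mpr (IsUnit.mk0 _ ?_)
      intro h
      exact hD (by rw [Polynomial.eq_C_of_natDegree_eq_zero (Nat.le_zero.mp hdeg), h, map_zero])
    exact this.dvd
  | succ n IH =>
    intro D E hD hdeg hkey
    by_cases hu : IsUnit D
    · exact hu.dvd
    obtain ⟨q, hqirr, w, rfl⟩ := WfDvdMonoid.exists_irreducible_factor hu hD
    have hq := (UniqueFactorizationMonoid.irreducible_iff_prime).mp hqirr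
    have hq0 : q ≠ 0 := hqirr.ne_zero
    have hw0 : w ≠ 0 := fun h => hD (by rw [h, mul_zero])
    have hqdeg : q.natDegree ≠ 0 := by
      intro h
      have hC := Polynomial.eq_C_of_natDegree_eq_zero h
      have hc : q.coeff 0 ≠ 0 := fun hc => hq0 (by rw [hC, hc, map_zero])
      exact hqirr.not_isUnit (hC ▸ Polynomial.isUnit_C.mpr (IsUnit.mk0 _ hc))
    have hwdeg : w.natDegree ≤ n := by
      have := Polynomial.natDegree_mul hq0 hw0
      omega
    have hw : w ∣ E ^ n := IH w E hw0 hwdeg (fun p hp hpd => hkey p hp (hpd.mul_left q))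
    have hqE : q ∣ E := hkey q hq (dvd_mul_right q w)
    calc q * w ∣ E * E ^ n := mul_dvd_mul hqE hw
    _ = E ^ (n + 1) := (pow_succ' E n).symm

lemma liftRF_eq {F K : Type*} [Field F] [Field K] [Algebra F K] (x : RatFunc F) :
    liftRF x = algebraMap K[X] (RatFunc K) (x.num.map (algebraMap F K)) /
      algebraMap K[X] (RatFunc K) (x.denom.map (algebraMap F K)) := by
  conv_lhs => rw [← RatFunc.num_div_denom x]
  rw [liftRF, RatFunc.coe_mapRingHom_eq_coe_map, RatFunc.map_apply_div]
  simp [Polynomial.coe_mapRingHom]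


lemma key_prime_dvd {F K : Type*} [Field F] [Field K] [CharZero K] [Algebra F K]
    (f : RatFunc K) (ρ : ℕ) (ℓ : ℕ → RatFunc F) (hρ : ℓ ρ ≠ 0)
    (hL : ∑ i ∈ Finset.range (ρ + 1), liftRF (ℓ i) * ratDeriv^[i] f = 0)
    {p : K[X]} (hp : Prime p) (hpd : p ∣ f.denom) :
    p ∣ ((ℓ ρ).num * ∏ j ∈ (Finset.range (ρ + 1)).erase ρ, (ℓ j).denom).map
      (algebraMap F K) := by
  classical
  set φ := algebraMap K[X] (RatFunc K) with hφ
  obtain ⟨e, C₀, hC₀, hdenom⟩ := WfDvdMonoid.max_power_factor f.denom_ne_zero hp.irreducible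
  have he : e ≠ 0 := by
    rintro rfl
    rw [pow_zero, one_mul] at hdenom
    exact hC₀ (hdenom ▸ hpd)
  have hnum : ¬ p ∣ f.num := fun hdvd =>
    hp.not_unit ((RatFunc.isCoprime_num_denom f).isUnit_of_dvd' hdvd hpd)
  have hfrep : f = φ f.num / φ (p ^ e * C₀) := by
    rw [← hdenom, hφ, RatFunc.num_div_denom]
  have hrep : ∀ i : ℕ, ∃ A' C' : K[X], (¬ p ∣ A') ∧ (¬ p ∣ C') ∧
      ratDeriv^[i] f = φ A' / φ (p ^ (e + i) * C') := by
    intro i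
    obtain ⟨A', C', h1, h2, h3⟩ := ratDeriv_iter hp i he hnum hC₀
    exact ⟨A', C', h1, h2, by rw [hfrep]; exact h3⟩
  choose Av Cv hAv hCv hEq using hrep
  set N : ℕ → K[X] := fun i => (ℓ i).num.map (algebraMap F K) with hN
  set D : ℕ → K[X] := fun i => (ℓ i).denom.map (algebraMap F K) with hD
  have hDne : ∀ i, D i ≠ 0 := fun i =>
    (Polynomial.map_ne_zero_iff (algebraMap F K).injective).mpr (RatFunc.denom_ne_zero _)
  have hPCne : ∀ i : ℕ, p ^ (e + i) * Cv i ≠ 0 := fun i =>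
    mul_ne_zero (pow_ne_zero _ hp.ne_zero) (fun h => hCv i (h ▸ dvd_zero p))
  set big : K[X] := (∏ j ∈ Finset.range (ρ + 1), D j) *
      (p ^ (e + ρ) * ∏ j ∈ Finset.range (ρ + 1), Cv j) with hbig
  set T : ℕ → K[X] := fun i => N i * Av i *
      ((∏ j ∈ (Finset.range (ρ + 1)).erase i, D j) *
       (p ^ (ρ - i) * ∏ j ∈ (Finset.range (ρ + 1)).erase i, Cv j)) with hT
  have hterm : ∀ i ∈ Finset.range (ρ + 1),
      liftRF (ℓ i) * ratDeriv^[i] f * φ big = φ (T i) := by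
    intro i hi
    have hile : i ≤ ρ := by
      have := Finset.mem_range.mp hi; omega
    have hbig2 : big = (D i * (p ^ (e + i) * Cv i)) *
        ((∏ j ∈ (Finset.range (ρ + 1)).erase i, D j) *
         (p ^ (ρ - i) * ∏ j ∈ (Finset.range (ρ + 1)).erase i, Cv j)) := by
      rw [hbig, ← Finset.mul_prod_erase _ D hi, ← Finset.mul_prod_erase _ Cv hi]
      have hpow : p ^ (e + i) * p ^ (ρ - i) = p ^ (e + ρ) := by
        rw [← pow_add]
        congr 1
        omega
      rw [← hpow]
      ring
    have h1 : φ (D i) ≠ 0 := RatFunc.algebraMap_ne_zero (hDne i)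
    have h2 : φ (p ^ (e + i) * Cv i) ≠ 0 := RatFunc.algebraMap_ne_zero (hPCne i)
    have hfact : φ big = (φ (D i) * φ (p ^ (e + i) * Cv i)) *
        φ ((∏ j ∈ (Finset.range (ρ + 1)).erase i, D j) *
           (p ^ (ρ - i) * ∏ j ∈ (Finset.range (ρ + 1)).erase i, Cv j)) := by
      rw [hbig2, map_mul, map_mul]
    rw [liftRF_eq, hEq i, hfact, div_mul_div_comm, ← mul_assoc,
      div_mul_cancel₀ _ (mul_ne_zero h1 h2)]
    simp only [hT, hN, map_mul]
    rfl
  have hsum : (∑ i ∈ Finset.range (ρ + 1), T i) = 0 := by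
    apply RatFunc.algebraMap_injective K
    rw [map_sum, map_zero]
    calc ∑ i ∈ Finset.range (ρ + 1), φ (T i)
        = ∑ i ∈ Finset.range (ρ + 1), liftRF (ℓ i) * ratDeriv^[i] f * φ big :=
          (Finset.sum_congr rfl hterm).symm
      _ = (∑ i ∈ Finset.range (ρ + 1), liftRF (ℓ i) * ratDeriv^[i] f) * φ big := by
          rw [Finset.sum_mul]
      _ = 0 := by rw [hL, zero_mul]
  have hTsplit : T ρ = - ∑ i ∈ Finset.range ρ, T i := by
    rw [Finset.sum_range_succ] at hsum
    exact eq_neg_of_add_eq_zero_right hsum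
  have hdvdTρ : p ∣ T ρ := by
    rw [hTsplit]
    apply Dvd.dvd.neg_right
    apply Finset.dvd_sum
    intro i hi
    have hilt : i < ρ := Finset.mem_range.mp hi
    have hppow : p ∣ p ^ (ρ - i) := dvd_pow_self p (by omega)
    exact dvd_mul_of_dvd_right
      (dvd_mul_of_dvd_right (dvd_mul_of_dvd_left hppow _) _) _
  rw [hT] at hdvdTρ
  simp only [Nat.sub_self, pow_zero, one_mul] at hdvdTρ
  have hres : p ∣ N ρ * ∏ j ∈ (Finset.range (ρ + 1)).erase ρ, D j := by
    rcases hp.dvd_mul.mp hdvdTρ with h | h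
    · rcases hp.dvd_mul.mp h with h' | h'
      · exact dvd_mul_of_dvd_left h' _
      · exact absurd h' (hAv ρ)
    · rcases hp.dvd_mul.mp h with h' | h'
      · exact dvd_mul_of_dvd_right h' _
      · obtain ⟨j, _, hj⟩ := (hp.dvd_finset_prod_iff _).mp h'
        exact absurd hj (hCv j)
  rwa [Polynomial.map_mul, Polynomial.map_prod]

/-- If `f = a/b ∈ F(t, x₁, …, x_m)` with `a, b ∈ F[t, x₁, …, x_m]`, `gcd(a, b) = 1`, is
annihilated by a nonzero operator `L = Σ_{i=0}^ρ ℓ_i D_t^i` with `ℓ_i ∈ F(t)` and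
`ℓ_ρ ≠ 0`, then the denominator `b` is split: `b = q(t) · r(x₁, …, x_m)` with
`q ∈ F[t]` and `r ∈ F[x₁, …, x_m]`. -/

theorem Dt_separable_denom_split {F : Type*} [Field F] [CharZero F] (m : ℕ)
    (a b : Polynomial (MvPolynomial (Fin m) F)) (hb : b ≠ 0) (hab : IsRelPrime a b)
    (f : RatFunc (FractionRing (MvPolynomial (Fin m) F)))
    (hf : f = polyToRF m a / polyToRF m b)
    (ρ : ℕ) (ℓ : ℕ → RatFunc F) (hρ : ℓ ρ ≠ 0)
    (hL : ∑ i ∈ Finset.range (ρ + 1), liftRF (ℓ i) * ratDeriv^[i] f = 0) :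
    ∃ (q : Polynomial F) (r : MvPolynomial (Fin m) F),
      b = Polynomial.C r * q.map (algebraMap F (MvPolynomial (Fin m) F)) := by
  classical
  set A := MvPolynomial (Fin m) F with hA
  set K := FractionRing A with hK
  letI : NormalizationMonoid A := UniqueFactorizationMonoid.normalizationMonoid.toNormalizationMonoid
  letI : NormalizedGCDMonoid A := UniqueFactorizationMonoid.toNormalizedGCDMonoid A
  have hinj : Function.Injective (algebraMap A K) := IsFractionRing.injective A K
  have hbK : b.map (algebraMap A K) ≠ 0 := (Polynomial.map_ne_zero_iff hinj).mpr hb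
  -- coprimality over K
  have hcop : IsCoprime (a.map (algebraMap A K)) (b.map (algebraMap A K)) :=
    isCoprime_map_of_isRelPrime hb hab
  -- the representation of f
  simp only [polyToRF] at hf
  have h1 : f.num * b.map (algebraMap A K) = f.denom * a.map (algebraMap A K) :=
    num_mul_eq hbK hf
  have hbdvd : b.map (algebraMap A K) ∣ f.denom := by
    apply (hcop.symm).dvd_of_dvd_mul_right
    exact ⟨f.num, by rw [← h1]; ring⟩
  -- the universal F-polynomial catching all prime factors of the denominator
  set c₀ : F[X] := (ℓ ρ).num * ∏ j ∈ (Finset.range (ρ + 1)).erase ρ, (ℓ j).denom with hc₀def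
  have hc₀ : c₀ ≠ 0 := mul_ne_zero (RatFunc.num_ne_zero hρ)
    (Finset.prod_ne_zero_iff.mpr fun j _ => RatFunc.denom_ne_zero _)
  have hkey : ∀ p : K[X], Prime p → p ∣ f.denom → p ∣ c₀.map (algebraMap F K) :=
    fun p hp hpd => key_prime_dvd f ρ ℓ hρ hL hp hpd
  set M := f.denom.natDegree with hM
  have hdpow : f.denom ∣ (c₀.map (algebraMap F K)) ^ M :=
    dvd_pow_of_prime_dvd M f.denom _ f.denom_ne_zero le_rfl hkey
  -- transfer to divisibility over A
  have hmapcomp : ∀ u : F[X], u.map (algebraMap F K) =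
      (u.map (algebraMap F A)).map (algebraMap A K) := by
    intro u
    rw [Polynomial.map_map, ← IsScalarTower.algebraMap_eq]
  have hbigdvd : b.map (algebraMap A K) ∣ ((c₀ ^ M).map (algebraMap F A)).map (algebraMap A K) := by
    refine hbdvd.trans ?_
    rw [← hmapcomp, Polynomial.map_pow]
    exact hdpow
  have hQne : c₀ ^ M ≠ 0 := pow_ne_zero _ hc₀
  have hQprim : ((c₀ ^ M).map (algebraMap F A)).IsPrimitive := isPrimitive_map_of_field hQne
  have hPPdvd : b.primPart.map (algebraMap A K) ∣
      ((c₀ ^ M).map (algebraMap F A)).map (algebraMap A K) :=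
    (Polynomial.map_dvd _ b.primPart_dvd).trans hbigdvd
  have hdvdA : b.primPart ∣ (c₀ ^ M).map (algebraMap F A) :=
    (b.isPrimitive_primPart).dvd_of_fraction_map_dvd_fraction_map hPPdvd
  obtain ⟨g, hg⟩ := hdvdA
  obtain ⟨q, hq⟩ := split_of_mul_eq_map hQne hg.symm
  exact ⟨q, b.content, by rw [← hq]; exact b.eq_C_content_mul_primPart⟩
end

section
/- Let F be a field of characteristic zero and let H be a nonzero element of a difference field extension of F(t, x₁,…,x_m) with σ_t(H) = a·H for some a ∈ F(t, x₁,…,x_m), where σ_t is the shift t ↦ t+1. If there exist nonzero p ∈ F(x₁,…,x_m)[t] and r ∈ F(t) such that a = (σ_t(p)/p)·r, then H is annihilated by a nonzero linear recurrence operator Σ ℓ_i S_t^i with coefficients ℓ_i ∈ F(t). -/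
open Polynomial

/-- The shift `σ_t` on `K[t]`, sending `p(t)` to `p(t + 1)`. -/
noncomputable def shiftP {K : Type*} [Field K] (p : Polynomial K) : Polynomial K :=
  p.comp (X + C 1)

section Aux

variable {K : Type*} [Field K]

lemma shiftP_ne_zero {p : Polynomial K} (hp : p ≠ 0) : shiftP p ≠ 0 := by
  intro h
  apply hp
  have : (shiftP p).comp (X - C 1) = p := by
    rw [shiftP, comp_assoc]
    simp
  rw [h, zero_comp] at this
  exact this.symm

/-- `shiftP` as a ring hom into `RatFunc K`. -/
noncomputable def shiftRH (K : Type*) [Field K] : Polynomial K →+* RatFunc K :=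
  (algebraMap (Polynomial K) (RatFunc K)).comp
    ((Polynomial.aeval (X + C 1 : Polynomial K)).toRingHom)

lemma shiftRH_apply (q : Polynomial K) :
    shiftRH K q = algebraMap (Polynomial K) (RatFunc K) (shiftP q) := by
  simp [shiftRH, shiftP, comp_eq_sum_left, aeval_def, eval₂_eq_sum]

/-- The shift on `RatFunc K`. -/
noncomputable def shiftQ (K : Type*) [Field K] : RatFunc K →+* RatFunc K :=
  RatFunc.liftRingHom (shiftRH K) (by
    intro q hq
    simp only [Submonoid.mem_comap, shiftRH_apply]
    exact mem_nonZeroDivisors_of_ne_zero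
      (RatFunc.algebraMap_ne_zero (shiftP_ne_zero (nonZeroDivisors.ne_zero hq))))

lemma shiftQ_div (u v : Polynomial K) :
    shiftQ K (algebraMap _ _ u / algebraMap _ _ v) =
      algebraMap (Polynomial K) (RatFunc K) (shiftP u) /
        algebraMap (Polynomial K) (RatFunc K) (shiftP v) := by
  rw [shiftQ, RatFunc.liftRingHom_apply_div, shiftRH_apply, shiftRH_apply]

lemma shiftQ_algebraMap (u : Polynomial K) :
    shiftQ K (algebraMap (Polynomial K) (RatFunc K) u) =
      algebraMap (Polynomial K) (RatFunc K) (shiftP u) := by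
  have := shiftQ_div (K := K) u 1
  simpa [shiftP] using this

/-- The `j`-fold shift of a polynomial. -/
noncomputable def shiftPn (j : ℕ) (p : Polynomial K) : Polynomial K :=
  p.comp (X + C (j : K))

lemma shiftPn_zero (p : Polynomial K) : shiftPn 0 p = p := by
  simp [shiftPn]

lemma shiftP_shiftPn (j : ℕ) (p : Polynomial K) :
    shiftP (shiftPn j p) = shiftPn (j + 1) p := by
  rw [shiftP, shiftPn, comp_assoc, shiftPn]
  congr 1
  push_cast
  simp [add_comp]
  ring

lemma shiftPn_eq_sum (j : ℕ) (p : Polynomial K) :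
    shiftPn j p = ∑ k ∈ Finset.range (p.natDegree + 1),
      C (p.coeff k) * (X + C (j : K)) ^ k := by
  rw [shiftPn, comp, eval₂_eq_sum_range]

end Aux

section Lift

variable {F K : Type*} [Field F] [Field K] [Algebra F K]

lemma liftRF_div (u v : Polynomial F) :
    (liftRF : RatFunc F →+* RatFunc K) (algebraMap _ _ u / algebraMap _ _ v) =
      algebraMap (Polynomial K) (RatFunc K) (u.map (algebraMap F K)) /
        algebraMap (Polynomial K) (RatFunc K) (v.map (algebraMap F K)) := by
  rw [liftRF, RatFunc.coe_mapRingHom_eq_coe_map, RatFunc.map_apply_div]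
  rfl

lemma liftRF_algebraMap (u : Polynomial F) :
    (liftRF : RatFunc F →+* RatFunc K) (algebraMap _ _ u) =
      algebraMap (Polynomial K) (RatFunc K) (u.map (algebraMap F K)) := by
  have := liftRF_div (K := K) u 1
  simpa using this

lemma shiftQ_liftRF (f : RatFunc F) :
    shiftQ K (liftRF f) = liftRF (shiftQ F f) := by
  rw [← RatFunc.num_div_denom f, liftRF_div, shiftQ_div, shiftQ_div, liftRF_div]
  have h : ∀ u : Polynomial F,
      (shiftP u).map (algebraMap F K) = shiftP (u.map (algebraMap F K)) := by
    intro u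
    simp [shiftP, Polynomial.map_comp]
  rw [h, h]

end Lift

/-- The iterated-ratio sequence: `ratSeq a j = ∏_{i<j} σ_t^i(a)`. -/
noncomputable def ratSeq {K : Type*} [Field K] (a : RatFunc K) : ℕ → RatFunc K
  | 0 => 1
  | j + 1 => shiftQ K (ratSeq a j) * a

lemma ratSeq_ne_zero {K : Type*} [Field K] {a : RatFunc K} (ha : a ≠ 0) (j : ℕ) :
    ratSeq a j ≠ 0 := by
  induction j with
  | zero => simp [ratSeq]
  | succ j ih =>
      simp only [ratSeq, mul_ne_zero_iff]
      exact ⟨fun h => ih ((map_eq_zero_iff _ (RingHom.injective _)).mp h), ha⟩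

set_option maxHeartbeats 2000000 in
set_option synthInstance.maxHeartbeats 1000000 in
/-- Hypergeometric case. Let `K = F(x₁, …, x_m)` and let `L` be a difference field
extension of `F(t, x₁, …, x_m) = K(t)` via `ι`, whose automorphism `σ` restricts to the
shift `t ↦ t + 1` on `K(t)` (acting on reduced numerators and denominators and fixing
`K`). Let `H ∈ L` be a nonzero hypergeometric term: `σ(H) = a·H` with `a ∈ K(t)`. If
there are a nonzero `p ∈ F(x₁,…,x_m)[t] = K[t]` and `r ∈ F(t)` with `a = (σ_t(p)/p)·r`,
then `H` is annihilated by a nonzero recurrence operator `Σ ℓ_j S_t^j`, `ℓ_j ∈ F(t)`. -/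
theorem hypergeometric_St_separable {F : Type*} [Field F] [CharZero F] (m : ℕ)
    {L : Type*} [Field L]
    (ι : RatFunc (FractionRing (MvPolynomial (Fin m) F)) →+* L)
    (σ : L ≃+* L)
    (hσι : ∀ u v : Polynomial (FractionRing (MvPolynomial (Fin m) F)),
      σ (ι (algebraMap _ _ u / algebraMap _ _ v)) =
        ι (algebraMap _ _ (shiftP u) / algebraMap _ _ (shiftP v)))
    (H : L) (hH : H ≠ 0)
    (a : RatFunc (FractionRing (MvPolynomial (Fin m) F)))
    (hHa : σ H = ι a * H)
    (p : Polynomial (FractionRing (MvPolynomial (Fin m) F))) (hp : p ≠ 0)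
    (r : RatFunc F)
    (ha : a = algebraMap _ _ (shiftP p) / algebraMap _ _ p * liftRF r) :
    ∃ (ρ : ℕ) (ℓ : ℕ → RatFunc F), ℓ ρ ≠ 0 ∧
      ∑ j ∈ Finset.range (ρ + 1), ι (liftRF (ℓ j)) * (σ ^ j) H = 0 := by
  classical
  set K := FractionRing (MvPolynomial (Fin m) F) with hK
  -- σ restricted to K(t) is the shift
  have hσQ : ∀ f : RatFunc K, σ (ι f) = ι (shiftQ K f) := by
    intro f
    rw [← RatFunc.num_div_denom f, hσι, shiftQ_div]
  -- r ≠ 0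
  have hr : r ≠ 0 := by
    rintro rfl
    apply hH
    have : σ H = 0 := by rw [hHa, ha]; simp
    have h2 : σ H = σ 0 := by rw [this, map_zero]
    exact σ.injective h2
  set P : RatFunc K := algebraMap (Polynomial K) (RatFunc K) p with hPdef
  have hP : P ≠ 0 := RatFunc.algebraMap_ne_zero hp
  -- Lemma B : (σ^j) H = ι (ratSeq a j) * H
  have hpow : ∀ j : ℕ, (σ ^ j) H = ι (ratSeq a j) * H := by
    intro j
    induction j with
    | zero =>
        rw [pow_zero]
        show H = ι (ratSeq a 0) * H
        simp [ratSeq]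
    | succ j ih =>
        have : (σ ^ (j + 1)) H = σ ((σ ^ j) H) := by
          rw [pow_succ']
          rfl
        rw [this, ih, map_mul, hσQ, hHa, ratSeq, map_mul]
        ring
  -- Lemma C : ratSeq a j * P = shiftPn j p * liftRF (ratSeq r j)
  have hAP : ∀ j : ℕ, ratSeq a j * P =
      algebraMap (Polynomial K) (RatFunc K) (shiftPn j p) * liftRF (ratSeq r j) := by
    intro j
    induction j with
    | zero => simp [ratSeq, shiftPn_zero, hPdef]
    | succ j ih =>
        have key : shiftQ K (ratSeq a j) * algebraMap (Polynomial K) (RatFunc K) (shiftP p) =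
            algebraMap (Polynomial K) (RatFunc K) (shiftPn (j + 1) p) *
              liftRF (shiftQ F (ratSeq r j)) := by
          have h2 := congrArg (shiftQ K) ih
          rw [map_mul, map_mul, shiftQ_algebraMap, shiftQ_algebraMap, shiftQ_liftRF,
            shiftP_shiftPn] at h2
          exact h2
        have haP : a * P = algebraMap (Polynomial K) (RatFunc K) (shiftP p) * liftRF r := by
          rw [ha]
          field_simp
          exact mul_comm _ _
        calc ratSeq a (j + 1) * P = shiftQ K (ratSeq a j) * (a * P) := by
              rw [ratSeq]; ring
          _ = shiftQ K (ratSeq a j) * algebraMap (Polynomial K) (RatFunc K) (shiftP p)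
                * liftRF r := by rw [haP]; ring
          _ = algebraMap (Polynomial K) (RatFunc K) (shiftPn (j + 1) p) *
                liftRF (shiftQ F (ratSeq r j) * r) := by rw [key, map_mul]; ring
          _ = _ := by rw [ratSeq]
  set d := p.natDegree with hd
  -- the elementary rational functions (X + j)^k over F
  set w : ℕ → ℕ → RatFunc F :=
    fun j k => algebraMap (Polynomial F) (RatFunc F) ((X + C (j : F)) ^ k) with hw
  -- expansion of shiftPn j p
  have hexp : ∀ j : ℕ, algebraMap (Polynomial K) (RatFunc K) (shiftPn j p) =
      ∑ k ∈ Finset.range (d + 1),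
        algebraMap (Polynomial K) (RatFunc K) (C (p.coeff k)) * liftRF (w j k) := by
    intro j
    have hwlift : ∀ k : ℕ, (liftRF : RatFunc F →+* RatFunc K) (w j k) =
        algebraMap (Polynomial K) (RatFunc K) ((X + C (j : K)) ^ k) := by
      intro k
      rw [hw, liftRF_algebraMap]
      congr 1
      simp [Polynomial.map_pow]
      rw [Polynomial.C_eq_natCast]
    rw [shiftPn_eq_sum, map_sum]
    refine Finset.sum_congr rfl fun k _ => ?_
    rw [hwlift, map_mul]
  -- linear dependence over F(t)
  have hdep : ¬ LinearIndependent (RatFunc F)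
      (fun j : Fin (d + 2) => (fun k : Fin (d + 1) =>
        ratSeq r (j : ℕ) * w (j : ℕ) (k : ℕ))) := by
    intro hli
    have hcard := hli.fintype_card_le_finrank
    rw [Module.finrank_pi] at hcard
    simp [Fintype.card_fin] at hcard
  obtain ⟨g, hg0, i0, hgi0⟩ := Fintype.not_linearIndependent_iff.mp hdep
  -- coefficients as a function ℕ → RatFunc F
  set ℓ0 : ℕ → RatFunc F := fun j => if h : j < d + 2 then g ⟨j, h⟩ else 0 with hℓ0
  have hℓ0eq : ∀ j : Fin (d + 2), ℓ0 (j : ℕ) = g j := by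
    intro j
    simp [hℓ0, j.isLt]
  -- pointwise dependence
  have hgk : ∀ k : ℕ, k < d + 1 →
      ∑ j ∈ Finset.range (d + 2), ℓ0 j * (ratSeq r j * w j k) = 0 := by
    intro k hk
    have h1 := congrFun hg0 ⟨k, hk⟩
    simp only [Finset.sum_apply, Pi.smul_apply, smul_eq_mul, Pi.zero_apply] at h1
    rw [← Fin.sum_univ_eq_sum_range (fun j => ℓ0 j * (ratSeq r j * w j k)) (d + 2)]
    rw [← h1]
    exact Finset.sum_congr rfl fun j _ => by rw [hℓ0eq]
  -- the main vanishing sum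
  have hS : ∑ j ∈ Finset.range (d + 2), liftRF (ℓ0 j) * ratSeq a j = 0 := by
    have hmul : (∑ j ∈ Finset.range (d + 2), liftRF (ℓ0 j) * ratSeq a j) * P = 0 := by
      rw [Finset.sum_mul]
      calc ∑ j ∈ Finset.range (d + 2), liftRF (ℓ0 j) * ratSeq a j * P
          = ∑ j ∈ Finset.range (d + 2), ∑ k ∈ Finset.range (d + 1),
              algebraMap (Polynomial K) (RatFunc K) (C (p.coeff k)) *
                liftRF (ℓ0 j * (ratSeq r j * w j k)) := by
            refine Finset.sum_congr rfl fun j _ => ?_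
            rw [mul_assoc, hAP j, hexp j, Finset.sum_mul, Finset.mul_sum]
            refine Finset.sum_congr rfl fun k _ => ?_
            simp only [map_mul]
            ring
        _ = ∑ k ∈ Finset.range (d + 1),
              algebraMap (Polynomial K) (RatFunc K) (C (p.coeff k)) *
                liftRF (∑ j ∈ Finset.range (d + 2), ℓ0 j * (ratSeq r j * w j k)) := by
            rw [Finset.sum_comm]
            refine Finset.sum_congr rfl fun k _ => ?_
            rw [map_sum, Finset.mul_sum]
        _ = 0 := by
            refine Finset.sum_eq_zero fun k hk => ?_
            rw [hgk k (Finset.mem_range.mp hk), map_zero, mul_zero]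
    exact (mul_eq_zero.mp hmul).resolve_right hP
  -- choose highest nonzero coefficient
  set s := (Finset.range (d + 2)).filter (fun j => ℓ0 j ≠ 0) with hs
  have hsne : s.Nonempty := by
    refine ⟨(i0 : ℕ), ?_⟩
    rw [hs, Finset.mem_filter, Finset.mem_range]
    exact ⟨i0.isLt, by rw [hℓ0eq]; exact hgi0⟩
  set ρ := s.max' hsne with hρ
  have hρmem : ρ ∈ s := s.max'_mem hsne
  have hρlt : ρ < d + 2 := Finset.mem_range.mp (Finset.mem_filter.mp hρmem).1
  have hρne : ℓ0 ρ ≠ 0 := (Finset.mem_filter.mp hρmem).2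
  refine ⟨ρ, ℓ0, hρne, ?_⟩
  have hzero : ∀ j ∈ Finset.range (d + 2), j ∉ Finset.range (ρ + 1) → ℓ0 j = 0 := by
    intro j hj hj'
    by_contra hne
    have : j ∈ s := Finset.mem_filter.mpr ⟨hj, hne⟩
    have := s.le_max' j this
    exact hj' (Finset.mem_range.mpr (by omega))
  have hsub : Finset.range (ρ + 1) ⊆ Finset.range (d + 2) :=
    Finset.range_subset_range.mpr (by omega)
  calc ∑ j ∈ Finset.range (ρ + 1), ι (liftRF (ℓ0 j)) * (σ ^ j) H
      = ∑ j ∈ Finset.range (d + 2), ι (liftRF (ℓ0 j)) * (σ ^ j) H := by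
        refine (Finset.sum_subset hsub fun j hj hj' => ?_)
        rw [hzero j hj hj', map_zero, map_zero, zero_mul]
    _ = (∑ j ∈ Finset.range (d + 2), ι (liftRF (ℓ0 j) * ratSeq a j)) * H := by
        rw [Finset.sum_mul]
        refine Finset.sum_congr rfl fun j _ => ?_
        rw [hpow j, map_mul]
        ring
    _ = 0 := by rw [← map_sum, hS, map_zero, zero_mul]
end

section
/- Let k be a field of characteristic zero and k(x, y) an algebraic function field of one variable over k defined by an irreducible f ∈ k[X, Y]. If (x̄, ȳ) ∈ k² satisfies f(x̄, ȳ) = 0 and ∂f/∂Y(x̄, ȳ) ≠ 0, then the field of constants of k(x, y) (the set of elements algebraic over k) equals k. -/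
open MvPolynomial Polynomial

noncomputable def cebfFwd (k : Type*) [CommSemiring k] :
    MvPolynomial (Fin 2) k →+* Polynomial (Polynomial k) :=
  MvPolynomial.eval₂Hom (Polynomial.C.comp Polynomial.C)
    ![Polynomial.C Polynomial.X, Polynomial.X]

noncomputable def cebfBwd (k : Type*) [CommSemiring k] :
    Polynomial (Polynomial k) →+* MvPolynomial (Fin 2) k :=
  Polynomial.eval₂RingHom (Polynomial.eval₂RingHom MvPolynomial.C (MvPolynomial.X 0))
    (MvPolynomial.X 1)

lemma cebf_bwd_fwd (k : Type*) [CommSemiring k] :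
    (cebfBwd k).comp (cebfFwd k) = RingHom.id _ := by
  apply MvPolynomial.ringHom_ext
  · intro a; simp [cebfFwd, cebfBwd]
  · intro i; fin_cases i <;> simp [cebfFwd, cebfBwd]

lemma cebf_fwd_bwd (k : Type*) [CommSemiring k] :
    (cebfFwd k).comp (cebfBwd k) = RingHom.id _ := by
  apply Polynomial.ringHom_ext'
  · apply Polynomial.ringHom_ext <;> simp [cebfFwd, cebfBwd]
  · simp [cebfFwd, cebfBwd]

noncomputable def cebfEquiv (k : Type*) [CommSemiring k] :
    MvPolynomial (Fin 2) k ≃+* Polynomial (Polynomial k) :=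
  RingEquiv.ofRingHom (cebfFwd k) (cebfBwd k) (cebf_fwd_bwd k) (cebf_bwd_fwd k)

lemma cebf_bwd_fwd_apply {k : Type*} [CommSemiring k] (p : MvPolynomial (Fin 2) k) :
    cebfBwd k (cebfFwd k p) = p := RingHom.congr_fun (cebf_bwd_fwd k) p

noncomputable def cebfNorm (k : Type*) [Field k] : NormalizationMonoid k := by
  classical
  exact
  { normUnit := fun a => if h : a = 0 then 1 else (Units.mk0 a h)⁻¹
    normUnit_zero := by simp
    normUnit_one := by
      simp only [dif_neg one_ne_zero]
      ext; simp
    normUnit_mul_units := fun u ha => by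
      simp only [dif_neg ha, dif_neg (mul_ne_zero ha (Units.ne_zero u))]
      ext; simp [mul_comm] }

lemma cebf_ker {k L : Type*} [Field k] [Field L] [Algebra k L]
    (x y : L) (htrans : Transcendental k x)
    (f : MvPolynomial (Fin 2) k) (hirr : Irreducible f)
    (hfxy : MvPolynomial.aeval ![x, y] f = 0) :
    RingHom.ker ((MvPolynomial.aeval ![x, y] : MvPolynomial (Fin 2) k →ₐ[k] L) : MvPolynomial (Fin 2) k →+* L)
      = Ideal.span {f} := by
  classical
  letI : NormalizationMonoid k := cebfNorm k
  letI : NormalizedGCDMonoid (Polynomial k) :=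
    UniqueFactorizationMonoid.toNormalizedGCDMonoid _
  set φ : MvPolynomial (Fin 2) k →+* L :=
    ((MvPolynomial.aeval ![x, y] : MvPolynomial (Fin 2) k →ₐ[k] L) : MvPolynomial (Fin 2) k →+* L)
    with hφdef
  set K := FractionRing (Polynomial k) with hK
  have hinj : Function.Injective
      ((Polynomial.aeval x : k[X] →ₐ[k] L) : k[X] →+* L) := by
    intro p q h
    by_contra hne
    exact htrans ⟨p - q, sub_ne_zero.mpr hne, by simpa [sub_eq_zero] using h⟩
  set θ : K →+* L := IsFractionRing.lift hinj with hθ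
  set Φ : Polynomial K →+* L := Polynomial.eval₂RingHom θ y with hΦ
  have hbridge : Φ.comp ((Polynomial.mapRingHom (algebraMap (Polynomial k) K)).comp (cebfFwd k)) = φ := by
    apply MvPolynomial.ringHom_ext
    · intro a
      simp [hΦ, hθ, cebfFwd, Polynomial.algebraMap_apply, hφdef]
    · intro i
      fin_cases i <;> simp [hΦ, hθ, cebfFwd, hφdef]
  have hgeval : ∀ p : MvPolynomial (Fin 2) k,
      Φ ((cebfFwd k p).map (algebraMap (Polynomial k) K)) = φ p := fun p =>
    RingHom.congr_fun hbridge p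
  have hker_ge : Ideal.span {f} ≤ RingHom.ker φ := by
    rw [Ideal.span_le, Set.singleton_subset_iff]
    exact hfxy
  refine le_antisymm (fun g hg => ?_) hker_ge
  rw [RingHom.mem_ker] at hg
  set F0 := cebfFwd k f with hF0
  set G0 := cebfFwd k g with hG0
  have hF0ne : F0 ≠ 0 := by
    intro h
    apply hirr.ne_zero
    rw [← cebf_bwd_fwd_apply (k := k) f, ← hF0, h, map_zero]
  have hF0irr : Irreducible F0 := by
    rw [hF0]
    exact (MulEquiv.irreducible_iff (cebfEquiv k).toMulEquiv).mpr hirr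
  have hΦF : Φ (F0.map (algebraMap (Polynomial k) K)) = 0 := by rw [hgeval]; exact hfxy
  have hdeg : F0.natDegree ≠ 0 := by
    intro h
    have hC : F0 = Polynomial.C (F0.coeff 0) := Polynomial.eq_C_of_natDegree_eq_zero h
    have hpne : F0.coeff 0 ≠ 0 := fun h0 => hF0ne (by rw [hC, h0, map_zero])
    apply htrans
    refine ⟨F0.coeff 0, hpne, ?_⟩
    have := hΦF
    rw [hC] at this
    simpa [hΦ, hθ, IsFractionRing.lift_algebraMap] using this
  have hprim : F0.IsPrimitive := by
    intro r hr
    obtain ⟨q, hq⟩ := hr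
    rcases hF0irr.isUnit_or_isUnit hq with h | h
    · exact Polynomial.isUnit_C.mp h
    · exfalso
      obtain ⟨s, hs, rfl⟩ := Polynomial.isUnit_iff.mp h
      exact hdeg (by rw [hq, ← Polynomial.C_mul, Polynomial.natDegree_C])
  have hFirr : Irreducible (F0.map (algebraMap (Polynomial k) K)) :=
    (hprim.irreducible_iff_irreducible_map_fraction_map (K := K)).mp hF0irr
  -- kernel of Φ is principal
  haveI hpr : (RingHom.ker Φ).IsPrincipal := IsPrincipalIdealRing.principal _
  have hdF : Submodule.IsPrincipal.generator (RingHom.ker Φ) ∣ F0.map (algebraMap (Polynomial k) K) := by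
    rw [← Ideal.mem_span_singleton, Ideal.span_singleton_generator]
    exact hΦF
  obtain ⟨cc, hcc⟩ := hdF
  have hFdvdG : F0.map (algebraMap (Polynomial k) K) ∣ G0.map (algebraMap (Polynomial k) K) := by
    rcases hFirr.isUnit_or_isUnit hcc with hu | hu
    · exfalso
      have : (1 : Polynomial K) ∈ RingHom.ker Φ := by
        rw [Ideal.eq_top_of_isUnit_mem _ (Submodule.IsPrincipal.generator_mem (RingHom.ker Φ)) hu]
        trivial
      rw [RingHom.mem_ker, map_one] at this
      exact one_ne_zero this
    · have hassoc : Associated (Submodule.IsPrincipal.generator (RingHom.ker Φ))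
          (F0.map (algebraMap (Polynomial k) K)) := ⟨hu.unit, by rw [hcc, IsUnit.unit_spec]⟩
      refine (hassoc.symm.dvd).trans ?_
      rw [← Ideal.mem_span_singleton, Ideal.span_singleton_generator, RingHom.mem_ker, hgeval]
      exact hg
  by_cases hG0z : G0 = 0
  · have : g = 0 := by rw [← cebf_bwd_fwd_apply (k := k) g, ← hG0, hG0z, map_zero]
    rw [this]
    exact Ideal.zero_mem _
  -- reduce to primitive part
  have hcont : algebraMap (Polynomial k) K G0.content ≠ 0 := by
    rw [Ne, IsFractionRing.to_map_eq_zero_iff]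
    exact fun h => hG0z (Polynomial.content_eq_zero_iff.mp h)
  have h1 : F0.map (algebraMap (Polynomial k) K) ∣ (G0.primPart).map (algebraMap (Polynomial k) K) := by
    have hassoc : Associated ((G0.primPart).map (algebraMap (Polynomial k) K))
        (G0.map (algebraMap (Polynomial k) K)) := by
      refine ⟨(Polynomial.isUnit_C.mpr (isUnit_iff_ne_zero.mpr hcont)).unit, ?_⟩
      rw [IsUnit.unit_spec]
      conv_rhs => rw [G0.eq_C_content_mul_primPart]
      rw [Polynomial.map_mul, Polynomial.map_C, mul_comm]
    exact hassoc.symm.dvd_iff_dvd_right.mp hFdvdG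
  have h2 : F0 ∣ G0.primPart :=
    hprim.dvd_of_fraction_map_dvd_fraction_map h1
  have h3 : F0 ∣ G0 := h2.trans (Polynomial.primPart_dvd G0)
  obtain ⟨H, hH⟩ := h3
  rw [Ideal.mem_span_singleton]
  exact ⟨cebfBwd k H, by
    have := congrArg (cebfBwd k) hH
    rwa [map_mul, cebf_bwd_fwd_apply, cebf_bwd_fwd_apply] at this⟩

lemma cebf_sub_mem {k : Type*} [CommRing k] (xb yb : k) (p : MvPolynomial (Fin 2) k) :
    p - MvPolynomial.C (MvPolynomial.eval ![xb, yb] p) ∈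
      Ideal.span {MvPolynomial.X 0 - MvPolynomial.C xb, MvPolynomial.X 1 - MvPolynomial.C yb} := by
  induction p using MvPolynomial.induction_on with
  | C a => simp
  | add p q hp hq =>
      have := Ideal.add_mem _ hp hq
      convert this using 1
      rw [map_add, map_add]
      ring
  | mul_X p i hp =>
      have h2 : MvPolynomial.X i - MvPolynomial.C (![xb, yb] i) ∈
          Ideal.span {MvPolynomial.X 0 - MvPolynomial.C xb,
            MvPolynomial.X 1 - MvPolynomial.C yb} := by
        fin_cases i
        · exact Ideal.subset_span (by simp)
        · exact Ideal.subset_span (by simp)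
      have := Ideal.add_mem _ (Ideal.mul_mem_right (MvPolynomial.X i) _ hp)
        (Ideal.mul_mem_left _ (MvPolynomial.C (MvPolynomial.eval ![xb, yb] p)) h2)
      convert this using 1
      rw [map_mul, MvPolynomial.eval_X, MvPolynomial.C_mul]
      ring

lemma cebf_ker_point {k : Type*} [CommRing k] (xb yb : k) (g : MvPolynomial (Fin 2) k)
    (hg : MvPolynomial.eval ![xb, yb] g = 0) :
    g ∈ Ideal.span {MvPolynomial.X 0 - MvPolynomial.C xb,
      MvPolynomial.X 1 - MvPolynomial.C yb} := by
  have := cebf_sub_mem xb yb g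
  rwa [hg, map_zero, sub_zero] at this

lemma cebf_pderiv {k : Type*} [CommRing k] (xb : k) (q : MvPolynomial (Fin 2) k) :
    MvPolynomial.aeval ![Polynomial.C xb, Polynomial.X] (pderiv 1 q) =
      Polynomial.derivative (MvPolynomial.aeval ![Polynomial.C xb, Polynomial.X] q) := by
  induction q using MvPolynomial.induction_on with
  | C a => simp
  | add p q hp hq => simp [hp, hq]
  | mul_X p i hp =>
      rw [pderiv_mul, map_add, map_mul, map_mul, hp, map_mul, derivative_mul]
      fin_cases i <;> simp

lemma cebf_decomp {k : Type*} [Field k] (f : MvPolynomial (Fin 2) k) (xb yb : k)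
    (hpt : MvPolynomial.eval ![xb, yb] f = 0)
    (hsm : MvPolynomial.eval ![xb, yb] (pderiv 1 f) ≠ 0) :
    ∃ q u : MvPolynomial (Fin 2) k,
      f = (MvPolynomial.X 0 - MvPolynomial.C xb) * q +
        (MvPolynomial.X 1 - MvPolynomial.C yb) * u ∧
      MvPolynomial.eval ![xb, yb] u ≠ 0 := by
  classical
  set σ : MvPolynomial (Fin 2) k →ₐ[k] Polynomial k :=
    MvPolynomial.aeval ![Polynomial.C xb, Polynomial.X] with hσ
  set ι : Polynomial k →+* MvPolynomial (Fin 2) k :=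
    Polynomial.eval₂RingHom MvPolynomial.C (MvPolynomial.X 1) with hι
  have hισX : ι Polynomial.X = MvPolynomial.X 1 := by simp [hι]
  have D1 : ∀ p : MvPolynomial (Fin 2) k,
      p - ι (σ p) ∈ Ideal.span {MvPolynomial.X 0 - MvPolynomial.C xb} := by
    intro p
    induction p using MvPolynomial.induction_on with
    | C a => simp [hσ, hι]
    | add p q hp hq =>
        have := Ideal.add_mem _ hp hq
        convert this using 1
        rw [map_add, map_add]
        ring
    | mul_X p i hp =>
        have h2 : MvPolynomial.X i - ι (σ (MvPolynomial.X i)) ∈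
            Ideal.span {MvPolynomial.X 0 - MvPolynomial.C xb} := by
          fin_cases i
          · show MvPolynomial.X 0 - ι (σ (MvPolynomial.X 0)) ∈ _
            have h3 : σ (MvPolynomial.X 0) = Polynomial.C xb := by simp [hσ]
            rw [h3]
            exact Ideal.subset_span (by simp [hι])
          · show MvPolynomial.X 1 - ι (σ (MvPolynomial.X 1)) ∈ _
            have h3 : σ (MvPolynomial.X 1) = Polynomial.X := by simp [hσ]
            rw [h3, hισX]
            simp
        have := Ideal.add_mem _ (Ideal.mul_mem_right (MvPolynomial.X i) _ hp)
          (Ideal.mul_mem_left _ (ι (σ p)) h2)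
        convert this using 1
        rw [map_mul, map_mul]
        ring
  have Bσ : ∀ p : MvPolynomial (Fin 2) k,
      Polynomial.eval yb (σ p) = MvPolynomial.eval ![xb, yb] p := by
    intro p
    have : (Polynomial.evalRingHom yb).comp (σ.toRingHom) = MvPolynomial.eval ![xb, yb] := by
      apply MvPolynomial.ringHom_ext
      · intro a; simp [hσ]
      · intro i; fin_cases i <;> simp [hσ]
    exact RingHom.congr_fun this p
  have Bι : ∀ p : Polynomial k,
      MvPolynomial.eval ![xb, yb] (ι p) = Polynomial.eval yb p := by
    intro p
    have : (MvPolynomial.eval ![xb, yb]).comp ι = Polynomial.evalRingHom yb := by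
      apply Polynomial.ringHom_ext <;> simp [hι]
    exact RingHom.congr_fun this p
  set P := σ f with hP
  have hP0 : Polynomial.eval yb P = 0 := by rw [hP, Bσ, hpt]
  have hP' : Polynomial.eval yb (Polynomial.derivative P) ≠ 0 := by
    rw [hP, ← cebf_pderiv, Bσ]
    exact hsm
  obtain ⟨U, hU⟩ : (Polynomial.X - Polynomial.C yb) ∣ P := by
    have := Polynomial.X_sub_C_dvd_sub_C_eval (a := yb) (p := P)
    rwa [hP0, map_zero, sub_zero] at this
  have hUy : Polynomial.eval yb U ≠ 0 := by
    intro h0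
    apply hP'
    rw [hU, derivative_mul]
    simp [h0]
  obtain ⟨q, hq⟩ : (MvPolynomial.X 0 - MvPolynomial.C xb) ∣ (f - ι P) :=
    Ideal.mem_span_singleton.mp (D1 f)
  refine ⟨q, ι U, ?_, ?_⟩
  · have hιP : ι P = (MvPolynomial.X 1 - MvPolynomial.C yb) * ι U := by
      rw [hU, map_mul, map_sub, hισX]
      simp [hι]
    have : f = (f - ι P) + ι P := by ring
    rw [this, hq, hιP]
  · rw [Bι]
    exact hUy

lemma cebf_residue {k L A : Type*} [Field k] [Field L] [Algebra k L] [CommRing A]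
    [IsLocalRing A]
    (j : A →+* L) (hjinj : Function.Injective j) (ρ : A →+* k) (aA : k →+* A)
    (hρa : ∀ c, ρ (aA c) = c) (hja : ∀ c, j (aA c) = algebraMap k L c)
    (hker : RingHom.ker ρ = IsLocalRing.maximalIdeal A)
    (v : L) (hv : IsAlgebraic k v) (w : A) (hwv : j w = v) :
    ∃ c : k, algebraMap k L c = v := by
  refine ⟨ρ w, ?_⟩
  by_contra hne
  set c := ρ w with hc
  set d := v - algebraMap k L c with hd
  have hdne : d ≠ 0 := sub_ne_zero.mpr fun h => hne h.symm
  set w' := w - aA c with hw'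
  have hjw' : j w' = d := by rw [hw', map_sub, hwv, hja, hd]
  have hw'm : w' ∈ IsLocalRing.maximalIdeal A := by
    rw [← hker, RingHom.mem_ker, hw', map_sub, hρa, hc, sub_self]
  have hdint : IsIntegral k d := (hv.isIntegral).sub isIntegral_algebraMap
  have hc0 : (minpoly k d).coeff 0 ≠ 0 := minpoly.coeff_zero_ne_zero hdint hdne
  have hev : j (Polynomial.eval₂ aA w' (minpoly k d)) =
      Polynomial.eval₂ (algebraMap k L) d (minpoly k d) := by
    rw [Polynomial.hom_eval₂, hjw']
    congr 1
    exact RingHom.ext hja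
  have hev0 : Polynomial.eval₂ aA w' (minpoly k d) = 0 := by
    have h2 : j (Polynomial.eval₂ aA w' (minpoly k d)) = j 0 := by
      rw [map_zero, hev, ← Polynomial.aeval_def, minpoly.aeval]
    exact hjinj h2
  have hsplit : aA ((minpoly k d).coeff 0) =
      -(w' * Polynomial.eval₂ aA w' (minpoly k d).divX) := by
    have h2 : Polynomial.eval₂ aA w' (Polynomial.X * (minpoly k d).divX +
        Polynomial.C ((minpoly k d).coeff 0)) = 0 := by
      rw [Polynomial.X_mul_divX_add]
      exact hev0
    rw [Polynomial.eval₂_add, Polynomial.eval₂_mul, Polynomial.eval₂_X,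
      Polynomial.eval₂_C] at h2
    linear_combination h2
  have hmem : aA ((minpoly k d).coeff 0) ∈ IsLocalRing.maximalIdeal A := by
    rw [hsplit]
    exact neg_mem (Ideal.mul_mem_right _ _ hw'm)
  rw [← hker, RingHom.mem_ker, hρa] at hmem
  exact hc0 hmem

lemma cebf_abstract {k L A : Type*} [Field k] [Field L] [Algebra k L] [CommRing A]
    [IsDomain A] [IsLocalRing A] [ValuationRing A]
    (j : A →+* L) (hjinj : Function.Injective j) (ρ : A →+* k) (aA : k →+* A)
    (hρa : ∀ c, ρ (aA c) = c) (hja : ∀ c, j (aA c) = algebraMap k L c)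
    (hker : RingHom.ker ρ = IsLocalRing.maximalIdeal A)
    (z : L) (hz : IsAlgebraic k z)
    (a b : A) (hb : j b ≠ 0) (hzab : z = j a / j b) :
    ∃ c : k, algebraMap k L c = z := by
  by_cases hz0 : z = 0
  · exact ⟨0, by simp [hz0]⟩
  have ha : j a ≠ 0 := fun h0 => hz0 (by rw [hzab, h0, zero_div])
  obtain ⟨cw, hcw⟩ := ValuationRing.cond a b
  rcases hcw with h | h
  · -- a * cw = b  →  z⁻¹ = j cw
    have h1 : j a * j cw = j b := by rw [← map_mul, h]
    have hcw0 : j cw ≠ 0 := by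
      intro h0; apply hb; rw [← h1, h0, mul_zero]
    have hjcw : j cw = z⁻¹ := by
      rw [hzab, ← h1]
      field_simp
    obtain ⟨c, hc⟩ := cebf_residue j hjinj ρ aA hρa hja hker z⁻¹ hz.inv cw hjcw
    have hcne : c ≠ 0 := fun h0 => hz0 (by
      rw [h0, map_zero] at hc
      rw [← inv_inv z, ← hc, inv_zero])
    exact ⟨c⁻¹, by rw [map_inv₀, hc, inv_inv]⟩
  · have h1 : j b * j cw = j a := by rw [← map_mul, h]
    have hjcw : j cw = z := by
      rw [hzab, eq_div_iff hb, ← h1]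
      ring
    exact cebf_residue j hjinj ρ aA hρa hja hker z hz cw hjcw

set_option maxHeartbeats 1000000 in
set_option synthInstance.maxHeartbeats 1000000 in
/-- Let `k(x, y)` be an algebraic function field of one variable over `k` (char `0`),
defined by an irreducible `f ∈ k[X, Y]` with `f(x, y) = 0`. If `(x̄, ȳ) ∈ k²` satisfies
`f(x̄, ȳ) = 0` and `∂f/∂Y(x̄, ȳ) ≠ 0`, then the field of constants of `k(x, y)` (the set of
elements algebraic over `k`) equals `k`. -/
theorem constants_eq_base_field
    {k L : Type*} [Field k] [CharZero k] [Field L] [Algebra k L]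
    (x y : L) (htrans : Transcendental k x)
    (hgen : IntermediateField.adjoin k {x, y} = ⊤)
    (f : MvPolynomial (Fin 2) k) (hirr : Irreducible f)
    (hfxy : MvPolynomial.aeval ![x, y] f = 0)
    (xb yb : k)
    (hpt : MvPolynomial.eval ![xb, yb] f = 0)
    (hsm : MvPolynomial.eval ![xb, yb] (MvPolynomial.pderiv 1 f) ≠ 0) :
    ∀ z : L, IsAlgebraic k z → ∃ c : k, algebraMap k L c = z := by
  classical
  intro z hz
  have hker : RingHom.ker ((MvPolynomial.aeval ![x, y] : MvPolynomial (Fin 2) k →ₐ[k] L) :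
      MvPolynomial (Fin 2) k →+* L) = Ideal.span {f} := cebf_ker x y htrans f hirr hfxy
  set I : Ideal (MvPolynomial (Fin 2) k) := Ideal.span {f} with hI
  haveI hIprime : I.IsPrime := (Ideal.span_singleton_prime hirr.ne_zero).mpr
    (UniqueFactorizationMonoid.irreducible_iff_prime.mp hirr)
  have hψ0I : ∀ a ∈ I, MvPolynomial.eval ![xb, yb] a = 0 := by
    intro a ha
    obtain ⟨c, rfl⟩ := Ideal.mem_span_singleton.mp ha
    rw [map_mul, hpt, zero_mul]
  set ψ : (MvPolynomial (Fin 2) k ⧸ I) →+* k :=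
    Ideal.Quotient.lift I (MvPolynomial.eval ![xb, yb]) hψ0I with hψ
  have hφaI : ∀ a ∈ I, ((MvPolynomial.aeval ![x, y] : MvPolynomial (Fin 2) k →ₐ[k] L) :
      MvPolynomial (Fin 2) k →+* L) a = 0 := by
    intro a ha
    rw [← RingHom.mem_ker, hker]
    exact ha
  set φb : (MvPolynomial (Fin 2) k ⧸ I) →+* L :=
    Ideal.Quotient.lift I ((MvPolynomial.aeval ![x, y] : MvPolynomial (Fin 2) k →ₐ[k] L) :
      MvPolynomial (Fin 2) k →+* L) hφaI with hφb
  have hφbmk : ∀ a, φb (Ideal.Quotient.mk I a) = MvPolynomial.aeval ![x, y] a := fun a =>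
    Ideal.Quotient.lift_mk I _ _
  have hψmk : ∀ a, ψ (Ideal.Quotient.mk I a) = MvPolynomial.eval ![xb, yb] a := fun a =>
    Ideal.Quotient.lift_mk I _ _
  have hφbinj : Function.Injective φb := by
    rw [RingHom.injective_iff_ker_eq_bot, hφb, Ideal.ker_quotient_lift _ hφaI, hker]
    exact Ideal.map_quotient_self I
  set m : Ideal (MvPolynomial (Fin 2) k ⧸ I) := RingHom.ker ψ with hm
  have hψsurj : Function.Surjective ψ := fun c =>
    ⟨Ideal.Quotient.mk I (MvPolynomial.C c), by rw [hψmk, MvPolynomial.eval_C]⟩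
  haveI hmmax : m.IsMaximal := RingHom.ker_isMaximal_of_surjective ψ hψsurj
  haveI : m.IsPrime := hmmax.isPrime
  haveI : IsDomain (Localization.AtPrime m) :=
    IsLocalization.isDomain_of_local_atPrime (hmmax.isPrime)
  haveI : IsNoetherianRing (MvPolynomial (Fin 2) k ⧸ I) :=
    isNoetherianRing_of_surjective _ _ (Ideal.Quotient.mk I) Ideal.Quotient.mk_surjective
  haveI : IsNoetherianRing (Localization.AtPrime m) :=
    IsLocalization.isNoetherianRing m.primeCompl (Localization.AtPrime m) ‹_›
  have hunit1 : ∀ s : m.primeCompl, IsUnit (ψ s) := fun s =>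
    isUnit_iff_ne_zero.mpr fun h0 => s.2 (RingHom.mem_ker.mpr h0)
  set ψt : Localization.AtPrime m →+* k :=
    IsLocalization.lift (S := Localization.AtPrime m) hunit1 with hψt
  have hunit2 : ∀ s : m.primeCompl, IsUnit (φb s) := fun s =>
    isUnit_iff_ne_zero.mpr fun h0 => by
      have h1 : (s : MvPolynomial (Fin 2) k ⧸ I) = 0 := hφbinj (by rw [h0, map_zero])
      exact s.2 (by rw [h1]; exact zero_mem m)
  set j : Localization.AtPrime m →+* L :=
    IsLocalization.lift (S := Localization.AtPrime m) hunit2 with hj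
  have hψteq : ∀ r, ψt (algebraMap _ (Localization.AtPrime m) r) = ψ r := fun r =>
    IsLocalization.lift_eq hunit1 r
  have hjeq : ∀ r, j (algebraMap _ (Localization.AtPrime m) r) = φb r := fun r =>
    IsLocalization.lift_eq hunit2 r
  have hjinj : Function.Injective j := by
    rw [injective_iff_map_eq_zero]
    intro w hw
    obtain ⟨⟨r, s⟩, rfl⟩ := IsLocalization.mk'_surjective m.primeCompl w
    have hspec := IsLocalization.mk'_spec (Localization.AtPrime m) r s
    have h1 : φb r = 0 := by
      rw [← hjeq r, ← hspec, map_mul, hw, zero_mul]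
    have h2 : r = 0 := hφbinj (by rw [h1, map_zero])
    dsimp only
    rw [h2, IsLocalization.mk'_zero]
  have hψtsurj : Function.Surjective ψt := fun c =>
    ⟨algebraMap _ (Localization.AtPrime m) (Ideal.Quotient.mk I (MvPolynomial.C c)), by
      rw [hψteq, hψmk, MvPolynomial.eval_C]⟩
  haveI hkermax : (RingHom.ker ψt).IsMaximal := RingHom.ker_isMaximal_of_surjective ψt hψtsurj
  have hkerψt : RingHom.ker ψt = IsLocalRing.maximalIdeal (Localization.AtPrime m) :=
    IsLocalRing.eq_maximalIdeal hkermax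
  set t0 := Ideal.Quotient.mk I (MvPolynomial.X 0 - MvPolynomial.C xb) with ht0
  set t1 := Ideal.Quotient.mk I (MvPolynomial.X 1 - MvPolynomial.C yb) with ht1
  set T0 := algebraMap _ (Localization.AtPrime m) t0 with hT0
  set T1 := algebraMap _ (Localization.AtPrime m) t1 with hT1
  have ht0m : t0 ∈ m := RingHom.mem_ker.mpr (by rw [ht0, hψmk]; simp)
  have hmle : m ≤ Ideal.span {t0, t1} := by
    intro a ha
    obtain ⟨b, rfl⟩ := Ideal.Quotient.mk_surjective a
    have hb : MvPolynomial.eval ![xb, yb] b = 0 := by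
      rw [← hψmk]
      exact RingHom.mem_ker.mp ha
    have hmem := cebf_ker_point xb yb b hb
    have h2 := Ideal.mem_map_of_mem (Ideal.Quotient.mk I) hmem
    rwa [Ideal.map_span, Set.image_insert_eq, Set.image_singleton] at h2
  obtain ⟨q, u, hdec, hu⟩ := cebf_decomp f xb yb hpt hsm
  have hmkf : Ideal.Quotient.mk I f = 0 := by
    rw [Ideal.Quotient.eq_zero_iff_mem, hI]
    exact Ideal.mem_span_singleton_self f
  have hrel : t1 * (Ideal.Quotient.mk I u) = -(t0 * Ideal.Quotient.mk I q) := by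
    have h1 := hmkf
    rw [hdec, map_add, map_mul, map_mul, ← ht0, ← ht1] at h1
    linear_combination h1
  have huunit : IsUnit (algebraMap _ (Localization.AtPrime m) (Ideal.Quotient.mk I u)) := by
    refine IsLocalization.map_units (M := m.primeCompl) (Localization.AtPrime m) ⟨Ideal.Quotient.mk I u, ?_⟩
    show Ideal.Quotient.mk I u ∉ RingHom.ker ψ
    intro hmem
    rw [RingHom.mem_ker, hψmk] at hmem
    exact hu hmem
  have hT1mem : T1 ∈ Ideal.span {T0} := by
    rw [Ideal.mem_span_singleton]
    obtain ⟨v, hv⟩ := huunit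
    have h1 := congrArg (algebraMap _ (Localization.AtPrime m)) hrel
    rw [map_mul, map_neg, map_mul, ← hv, ← hT0, ← hT1] at h1
    refine ⟨-(algebraMap _ (Localization.AtPrime m) (Ideal.Quotient.mk I q)) * ↑v⁻¹, ?_⟩
    calc T1 = T1 * ↑v * ↑v⁻¹ := by rw [Units.mul_inv_cancel_right]
    _ = -(T0 * algebraMap _ (Localization.AtPrime m) (Ideal.Quotient.mk I q)) * ↑v⁻¹ := by
        rw [h1]
    _ = T0 * (-(algebraMap _ (Localization.AtPrime m) (Ideal.Quotient.mk I q)) * ↑v⁻¹) := by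
        ring
  have hmax_eq : IsLocalRing.maximalIdeal (Localization.AtPrime m) = Ideal.span {T0} := by
    apply le_antisymm
    · rw [← Localization.AtPrime.map_eq_maximalIdeal, Ideal.map_le_iff_le_comap]
      intro a ha
      have h3 := hmle ha
      have h2 : Ideal.span {t0, t1} ≤ Ideal.comap (algebraMap _ (Localization.AtPrime m))
          (Ideal.span {T0}) := by
        rw [Ideal.span_le]
        rintro b (hb | hb)
        · rw [hb]
          exact Ideal.mem_comap.mpr (Ideal.subset_span rfl)
        · rw [Set.mem_singleton_iff] at hb
          rw [hb]
          exact Ideal.mem_comap.mpr hT1mem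
      exact h2 h3
    · rw [Ideal.span_le, Set.singleton_subset_iff, SetLike.mem_coe,
        ← Localization.AtPrime.map_eq_maximalIdeal]
      exact Ideal.mem_map_of_mem _ ht0m
  have hT0ne : T0 ≠ 0 := by
    intro h0
    have hx : x - algebraMap k L xb = 0 := by
      have h1 : j T0 = 0 := by rw [h0, map_zero]
      rw [hT0, hjeq, ht0, hφbmk] at h1
      simpa using h1
    apply htrans
    refine ⟨Polynomial.X - Polynomial.C xb, Polynomial.X_sub_C_ne_zero xb, ?_⟩
    rw [map_sub, Polynomial.aeval_X, Polynomial.aeval_C]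
    exact hx
  have hnf : ¬ IsField (Localization.AtPrime m) := by
    intro hfield
    rw [IsLocalRing.isField_iff_maximalIdeal_eq] at hfield
    apply hT0ne
    have h1 : T0 ∈ IsLocalRing.maximalIdeal (Localization.AtPrime m) := by
      rw [hmax_eq]; exact Ideal.subset_span rfl
    rwa [hfield, Ideal.mem_bot] at h1
  have hprin : (IsLocalRing.maximalIdeal (Localization.AtPrime m)).IsPrincipal :=
    ⟨⟨T0, hmax_eq⟩⟩
  haveI hval : ValuationRing (Localization.AtPrime m) :=
    ((IsDiscreteValuationRing.TFAE (Localization.AtPrime m) hnf).out 1 4).mpr hprin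
  -- abstract residue argument
  set aR : k →+* Localization.AtPrime m := (algebraMap _ (Localization.AtPrime m)).comp
    ((Ideal.Quotient.mk I).comp (MvPolynomial.C : k →+* MvPolynomial (Fin 2) k)) with haR
  have hjaR : ∀ a : k, j (aR a) = algebraMap k L a := fun a => by
    rw [haR, RingHom.comp_apply, hjeq, RingHom.comp_apply, hφbmk]
    simp
  have hψtaR : ∀ a : k, ψt (aR a) = a := fun a => by
    rw [haR, RingHom.comp_apply, hψteq, RingHom.comp_apply, hψmk, MvPolynomial.eval_C]
  by_cases hz0 : z = 0
  · exact ⟨0, by simp [hz0]⟩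
  have hrange : ({x, y} : Set L) = Set.range ![x, y] := by
    ext t
    simp [Fin.exists_fin_two, eq_comm, or_comm]
  have hzadj : z ∈ IntermediateField.adjoin k (Set.range ![x, y]) := by
    rw [← hrange, hgen]; trivial
  obtain ⟨r, s, hrs⟩ := (IntermediateField.mem_adjoin_range_iff k ![x, y] z).mp hzadj
  have hφs : MvPolynomial.aeval ![x, y] s ≠ 0 := fun h0 => hz0 (by rw [hrs, h0, div_zero])
  have hja : j (algebraMap _ (Localization.AtPrime m) (Ideal.Quotient.mk I r))
      = MvPolynomial.aeval ![x, y] r := by rw [hjeq, hφbmk]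
  have hjb : j (algebraMap _ (Localization.AtPrime m) (Ideal.Quotient.mk I s))
      = MvPolynomial.aeval ![x, y] s := by rw [hjeq, hφbmk]
  refine cebf_abstract j hjinj ψt aR hψtaR hjaR hkerψt z hz
    (algebraMap _ (Localization.AtPrime m) (Ideal.Quotient.mk I r))
    (algebraMap _ (Localization.AtPrime m) (Ideal.Quotient.mk I s)) ?_ ?_
  · rw [hjb]; exact hφs
  · rw [hja, hjb]; exact hrs
end
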